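/- arXiv:2401.01723 — 4 statements merged into one kernel-verified Lean document; each statement's English description precedes it below -/
import Mathlib

section
/- For indeterminates x_1,…,x_n, the determinant of the n×n matrix with (i,j)-entry x_i^{n-j+1} − x_i^{-(n-j+1)} equals ∏_{i=1}^n (x_i − x_i^{-1}) · ∏_{1≤i<j≤n} (x_i + x_i^{-1} − x_j − x_j^{-1}). -/
open Polynomial

noncomputable def sympQ (K : Type*) [Field K] : ℕ → K[X]
  | 0 => 1
  | 1 => X
  | (k+2) => X * sympQ K (k+1) - sympQ K k

lemma sympQ_monic_natDegree (K : Type*) [Field K] :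
    ∀ k, (sympQ K k).Monic ∧ (sympQ K k).natDegree = k := by
  intro k
  induction k using Nat.strong_induction_on with
  | _ k ih =>
    match k with
    | 0 => exact ⟨monic_one, natDegree_one⟩
    | 1 => exact ⟨monic_X, natDegree_X⟩
    | (k+2) =>
      obtain ⟨h1m, h1d⟩ := ih (k+1) (by omega)
      obtain ⟨h0m, h0d⟩ := ih k (by omega)
      have hm : (X * sympQ K (k+1)).Monic := monic_X.mul h1m
      have hd : (X * sympQ K (k+1)).natDegree = k + 2 := by
        rw [natDegree_X_mul h1m.ne_zero, h1d]
      have hlt' : (sympQ K k).natDegree < (X * sympQ K (k+1)).natDegree := by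
        rw [hd, h0d]; omega
      constructor
      · exact hm.sub_of_left (degree_lt_degree hlt')
      · rw [sympQ, natDegree_sub_eq_left_of_natDegree_lt hlt', hd]

lemma sympQ_eval {K : Type*} [Field K] (x : K) (hx : x ≠ 0) :
    ∀ k, (x - x⁻¹) * (sympQ K k).eval (x + x⁻¹) = x ^ (k+1) - x⁻¹ ^ (k+1) := by
  have hinv : x * x⁻¹ = 1 := mul_inv_cancel₀ hx
  intro k
  induction k using Nat.strong_induction_on with
  | _ k ih =>
    match k with
    | 0 => simp [sympQ]
    | 1 => simp only [sympQ, eval_X]; ring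
    | (k+2) =>
      have ih1 := ih (k+1) (by omega)
      have ih0 := ih k (by omega)
      simp only [sympQ, eval_sub, eval_mul, eval_X]
      linear_combination (x + x⁻¹) * ih1 - ih0 + (x ^ (k+1) - x⁻¹ ^ (k+1)) * hinv

/-- Weyl denominator formula for the symplectic group Sp(2n). -/
theorem symplectic_weyl_denominator {K : Type*} [Field K] (n : ℕ) (x : Fin n → K)
    (hx : ∀ i, x i ≠ 0) :
    (Matrix.of fun i j : Fin n => x i ^ (n - (j : ℕ)) - (x i)⁻¹ ^ (n - (j : ℕ))).det
      = (∏ i, (x i - (x i)⁻¹)) *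
        ∏ i, ∏ j ∈ Finset.Ioi i, (x i + (x i)⁻¹ - x j - (x j)⁻¹) := by
  set z : Fin n → K := fun i => x i + (x i)⁻¹ with hz
  have hentry : ∀ (i j : Fin n),
      x i ^ (n - (j : ℕ)) - (x i)⁻¹ ^ (n - (j : ℕ))
        = (x i - (x i)⁻¹) * (sympQ K (n - 1 - j)).eval (z i) := by
    intro i j
    have hj : (j : ℕ) < n := j.isLt
    have : n - (j : ℕ) = (n - 1 - j) + 1 := by omega
    rw [this, sympQ_eval (x i) (hx i)]
  have key : (Matrix.of fun i j : Fin n => x i ^ (n - (j : ℕ)) - (x i)⁻¹ ^ (n - (j : ℕ)))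
      = Matrix.of fun i j : Fin n => (x i - (x i)⁻¹) *
          (Matrix.of fun i j : Fin n => (sympQ K (n - 1 - j)).eval (z i)) i j := by
    ext i j; exact hentry i j
  rw [key, Matrix.det_mul_column]
  congr 1
  -- relate to Vandermonde via reversal
  have hvdm := Matrix.det_eval_matrixOfPolynomials_eq_det_vandermonde
      (fun i : Fin n => z (Fin.rev i)) (fun j => sympQ K j)
      (fun j => (sympQ_monic_natDegree K j).2) (fun j => (sympQ_monic_natDegree K j).1)
  have hsub : (Matrix.of fun i j : Fin n => (sympQ K (n - 1 - j)).eval (z i))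
      = (Matrix.of fun i j : Fin n => (sympQ K j).eval (z (Fin.rev i))).submatrix
          Fin.revPerm Fin.revPerm := by
    ext i j
    simp [Matrix.submatrix, Fin.rev_rev, Fin.val_rev]
    congr 2
    omega
  rw [hsub, Matrix.det_submatrix_equiv_self, ← hvdm, Matrix.det_vandermonde]
  -- reindex the product
  rw [Finset.prod_sigma', Finset.prod_sigma']
  refine Finset.prod_nbij' (fun p => ⟨Fin.rev p.2, Fin.rev p.1⟩)
    (fun p => ⟨Fin.rev p.2, Fin.rev p.1⟩) ?_ ?_ ?_ ?_ ?_
  · rintro ⟨i, j⟩ h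
    simp only [Finset.mem_sigma, Finset.mem_univ, Finset.mem_Ioi, true_and] at h ⊢
    exact Fin.rev_lt_rev.mpr h
  · rintro ⟨i, j⟩ h
    simp only [Finset.mem_sigma, Finset.mem_univ, Finset.mem_Ioi, true_and] at h ⊢
    exact Fin.rev_lt_rev.mpr h
  · rintro ⟨i, j⟩ h; simp [Fin.rev_rev]
  · rintro ⟨i, j⟩ h; simp [Fin.rev_rev]
  · rintro ⟨i, j⟩ h
    simp [Fin.rev_rev, hz]
    ring
end

section
/- Let λ, with ℓ(λ) ≤ n₁ and λ₁ ≤ n₂, be a partition. Then the sets {λ_i + n₁ − i : 1 ≤ i ≤ n₁} and {n₁ − 1 + j − λ'_j : 1 ≤ j ≤ n₂} are disjoint and their union is {0, 1, …, n₁ + n₂ − 1}. -/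
/-- For a partition `λ` with at most `n₁` parts, each at most `n₂`, the sets
`{λ_i + n₁ - i : 1 ≤ i ≤ n₁}` and `{n₁ - 1 + j - λ'_j : 1 ≤ j ≤ n₂}` are disjoint
and their union is `{0, 1, …, n₁ + n₂ - 1}`.  (Here `λ` is 0-indexed: `lam i` is
`λ_{i+1}`, and the conjugate `λ'_j = #{i : λ_i ≥ j}`.) -/
theorem partition_staircase_complement (n₁ n₂ : ℕ) (lam : ℕ → ℕ) (hA : Antitone lam)
    (hlen : ∀ i, n₁ ≤ i → lam i = 0) (hmax : lam 0 ≤ n₂) :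
    Disjoint
      ((Finset.range n₁).image (fun i => lam i + (n₁ - 1 - i)))
      ((Finset.range n₂).image (fun j =>
        n₁ + j - ((Finset.range n₁).filter (fun i => j + 1 ≤ lam i)).card)) ∧
    ((Finset.range n₁).image (fun i => lam i + (n₁ - 1 - i))) ∪
      ((Finset.range n₂).image (fun j =>
        n₁ + j - ((Finset.range n₁).filter (fun i => j + 1 ≤ lam i)).card))
      = Finset.range (n₁ + n₂) := by
  classical
  set c : ℕ → ℕ := fun j => ((Finset.range n₁).filter (fun i => j + 1 ≤ lam i)).card with hc
  have hcle : ∀ j, c j ≤ n₁ := fun j =>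
    (Finset.card_filter_le _ _).trans (by simp)
  have hkey : ∀ i j, i < n₁ → (j + 1 ≤ lam i ↔ i < c j) := by
    intro i j hi
    constructor
    · intro h
      have hsub : Finset.range (i + 1) ⊆
          (Finset.range n₁).filter (fun i => j + 1 ≤ lam i) := by
        intro x hx
        simp only [Finset.mem_range] at hx
        simp only [Finset.mem_filter, Finset.mem_range]
        exact ⟨lt_of_le_of_lt (by omega) hi, h.trans (hA (by omega))⟩
      have := Finset.card_le_card hsub
      simp only [Finset.card_range] at this
      exact this
    · intro h
      by_contra hcon
      push_neg at hcon
      have hsub : (Finset.range n₁).filter (fun i => j + 1 ≤ lam i) ⊆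
          Finset.range i := by
        intro x hx
        simp only [Finset.mem_filter, Finset.mem_range] at hx
        simp only [Finset.mem_range]
        by_contra hxi
        push_neg at hxi
        have := hA hxi
        omega
      have := Finset.card_le_card hsub
      simp only [Finset.card_range] at this
      have h2 : c j ≤ i := this
      omega
  have hcanti : ∀ j j', j ≤ j' → c j' ≤ c j := by
    intro j j' hjj
    apply Finset.card_le_card
    intro x hx
    simp only [Finset.mem_filter] at hx ⊢
    exact ⟨hx.1, by omega⟩
  have hdisj : Disjoint
      ((Finset.range n₁).image (fun i => lam i + (n₁ - 1 - i)))
      ((Finset.range n₂).image (fun j => n₁ + j - c j)) := by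
    rw [Finset.disjoint_left]
    intro d hdA hdB
    simp only [Finset.mem_image, Finset.mem_range] at hdA hdB
    obtain ⟨i, hi, hdi⟩ := hdA
    obtain ⟨j, hj, hdj⟩ := hdB
    have hdi' : lam i + (n₁ - 1 - i) = d := hdi
    have hdj' : n₁ + j - c j = d := hdj
    have hk := hkey i j hi
    have h1 := hcle j
    rcases le_or_gt (j + 1) (lam i) with h | h
    · have := hk.mp h
      omega
    · have : ¬ (i < c j) := fun hlt => by omega
      omega
  have hcardA : ((Finset.range n₁).image (fun i => lam i + (n₁ - 1 - i))).card = n₁ := by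
    rw [Finset.card_image_of_injOn, Finset.card_range]
    intro i hi i' hi' heq
    simp only [Finset.mem_coe, Finset.mem_range] at hi hi'
    have heq' : lam i + (n₁ - 1 - i) = lam i' + (n₁ - 1 - i') := heq
    by_contra hne
    rcases Nat.lt_or_ge i i' with h | h
    · have := hA (le_of_lt h)
      omega
    · have h' : i' < i := by omega
      have := hA (le_of_lt h')
      omega
  have hcardB : ((Finset.range n₂).image (fun j => n₁ + j - c j)).card = n₂ := by
    rw [Finset.card_image_of_injOn, Finset.card_range]
    intro j hj j' hj' heq
    simp only [Finset.mem_coe, Finset.mem_range] at hj hj'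
    have heq' : n₁ + j - c j = n₁ + j' - c j' := heq
    by_contra hne
    rcases Nat.lt_or_ge j j' with h | h
    · have h1 := hcanti j j' (le_of_lt h)
      have h2 := hcle j
      have h3 := hcle j'
      omega
    · have h' : j' < j := by omega
      have h1 := hcanti j' j (le_of_lt h')
      have h2 := hcle j
      have h3 := hcle j'
      omega
  refine ⟨hdisj, ?_⟩
  have hsub : ((Finset.range n₁).image (fun i => lam i + (n₁ - 1 - i))) ∪
      ((Finset.range n₂).image (fun j => n₁ + j - c j)) ⊆ Finset.range (n₁ + n₂) := by
    intro d hd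
    simp only [Finset.mem_union, Finset.mem_image, Finset.mem_range] at hd ⊢
    rcases hd with ⟨i, hi, hdi⟩ | ⟨j, hj, hdj⟩
    · have := hA (Nat.zero_le i)
      omega
    · omega
  refine Finset.eq_of_subset_of_card_le hsub ?_
  rw [Finset.card_union_of_disjoint hdisj, hcardA, hcardB, Finset.card_range]
end

section
/- Let λ be a partition of length at most n. Then the orthosymplectic Schur function in n symplectic variables X = (x₁,…,x_n) and one ordinary variable y satisfies spo_λ(X; y) = (1/D) · det( x_i^{λ_j+n−j+1} − x̄_i^{λ_j+n−j+1} + y·(x_i^{λ_j+n−j} − x̄_i^{λ_j+n−j}) )_{1≤i,j≤n}, where D = ∏_{i=1}^n (x_i − x̄_i) · ∏_{1≤i<j≤n} (x_i + x̄_i − x_j − x̄_j) and x̄_i = x_i^{-1}. -/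
/-- The symplectic Schur function `sp_λ(x₁,…,x_n)` via the Weyl character formula. -/
noncomputable def spSchur {K : Type*} [Field K] {n : ℕ} (x : Fin n → K) (lam : Fin n → ℕ) : K :=
  (Matrix.of fun i j : Fin n =>
      x i ^ (lam j + (n - (j : ℕ))) - (x i)⁻¹ ^ (lam j + (n - (j : ℕ)))).det /
  (Matrix.of fun i j : Fin n =>
      x i ^ (n - (j : ℕ)) - (x i)⁻¹ ^ (n - (j : ℕ))).det

/-- Complete homogeneous symmetric polynomial of degree `p` of a family `y`. -/
noncomputable def hsym {K : Type*} [CommRing K] {m : ℕ} (y : Fin m → K) (p : ℕ) : K :=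
  ∑ s : Sym (Fin m) p, (s.1.map y).prod

/-- `h_r` with integer index, vanishing for `r < 0`. -/
noncomputable def hInt {K : Type*} [CommRing K] {m : ℕ} (y : Fin m → K) (r : ℤ) : K :=
  if r < 0 then 0 else hsym y r.toNat

/-- The orthosymplectic Schur function `spo_λ(X;Y) = Σ_μ sp_μ(X) · s_{λ'/μ'}(Y)`, where the
sum is over partitions `μ ⊆ λ` of length at most `n` (the skew Schur polynomial vanishes for
other `μ`), the skew Schur polynomial `s_{λ'/μ'}` being given by the Jacobi–Trudi determinant
`det(h_{λ'_i − μ'_j − i + j})` of size `λ₁ ≥ ℓ(λ')`.  Here `lam : ℕ → ℕ` is `λ` (0-indexed),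
with all parts of `λ` among the first `L` entries. -/
noncomputable def spoSchur {K : Type*} [Field K] (n L : ℕ) {m : ℕ} (x : Fin n → K)
    (lam : ℕ → ℕ) (ys : Fin m → K) : K :=
  ∑ g : (i : Fin n) → Fin (lam i + 1),
    if ∀ i j : Fin n, i ≤ j → ((g j : ℕ) ≤ (g i : ℕ)) then
      spSchur x (fun i => (g i : ℕ)) *
        (Matrix.of fun i j : Fin (lam 0) =>
          hInt ys
            (((((Finset.range L).filter fun t => (i : ℕ) + 1 ≤ lam t).card : ℤ))
              - (((Finset.univ : Finset (Fin n)).filter fun t => (j : ℕ) + 1 ≤ (g t : ℕ)).card : ℤ)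
              - (i : ℕ) + (j : ℕ))).det
    else 0


open Polynomial Finset Equiv

lemma hsym_one {K : Type*} [CommRing K] (y : K) (p : ℕ) : hsym ![y] p = y ^ p := by
  have huniq : ∀ s : Sym (Fin 1) p, s = Sym.replicate p 0 := by
    intro s
    ext1
    rw [Sym.replicate]
    refine (Multiset.eq_replicate.mpr ⟨s.2, fun b _ => Subsingleton.elim b 0⟩)
  rw [hsym]
  rw [Finset.sum_eq_single (Sym.replicate p 0)]
  · have hd : (Sym.replicate p (0 : Fin 1)).1 = Multiset.replicate p 0 := rfl
    rw [hd]
    simp [Multiset.map_replicate, Multiset.prod_replicate]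
  · intro b _ hb; exact absurd (huniq b) hb
  · intro h; exact absurd (Finset.mem_univ _) h

lemma hInt_one {K : Type*} [CommRing K] (y : K) (r : ℤ) :
    hInt ![y] r = if r < 0 then 0 else y ^ r.toNat := by
  rw [hInt, hsym_one]

open Polynomial

noncomputable def cheb (K : Type*) [Field K] : ℕ → K[X]
  | 0 => 1
  | 1 => Polynomial.X
  | (k+2) => Polynomial.X * cheb K (k+1) - cheb K k

lemma cheb_monic_deg (K : Type*) [Field K] : ∀ k : ℕ, (cheb K k).Monic ∧ (cheb K k).natDegree = k := by
  intro k
  induction k using Nat.twoStepInduction with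
  | zero => exact ⟨monic_one, natDegree_one⟩
  | one => exact ⟨monic_X, natDegree_X⟩
  | more k ih1 ih2 =>
    obtain ⟨m1, d1⟩ := ih1
    obtain ⟨m2, d2⟩ := ih2
    have hm : (Polynomial.X * cheb K (k+1)).Monic := monic_X.mul m2
    have hd : (Polynomial.X * cheb K (k+1)).natDegree = k + 2 := by
      rw [natDegree_mul X_ne_zero m2.ne_zero, natDegree_X, d2]
      omega
    have hdeg : (cheb K k).degree < (Polynomial.X * cheb K (k+1)).degree := by
      rw [degree_eq_natDegree hm.ne_zero, hd, degree_eq_natDegree m1.ne_zero, d1]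
      exact_mod_cast Nat.lt_succ_of_lt (Nat.lt_succ_self k)
    constructor
    · show (Polynomial.X * cheb K (k+1) - cheb K k).Monic
      exact hm.sub_of_left hdeg
    · show (Polynomial.X * cheb K (k+1) - cheb K k).natDegree = k + 2
      rw [← hd]
      apply natDegree_sub_eq_left_of_natDegree_lt
      rw [d1, hd]; omega

lemma cheb_eval {K : Type*} [Field K] (x : K) (hx : x ≠ 0) :
    ∀ k : ℕ, (x - x⁻¹) * (cheb K k).eval (x + x⁻¹) = x ^ (k+1) - (x⁻¹) ^ (k+1) := by
  have hxx : x * x⁻¹ = 1 := mul_inv_cancel₀ hx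
  intro k
  induction k using Nat.twoStepInduction with
  | zero => simp [cheb]
  | one => show (x - x⁻¹) * (Polynomial.X.eval (x + x⁻¹)) = _; rw [eval_X]; ring
  | more k ih1 ih2 =>
    show (x - x⁻¹) * ((Polynomial.X * cheb K (k+1) - cheb K k).eval (x + x⁻¹)) = _
    rw [eval_sub, eval_mul, eval_X]
    have : (x - x⁻¹) * ((x + x⁻¹) * (cheb K (k+1)).eval (x + x⁻¹) - (cheb K k).eval (x + x⁻¹))
        = (x + x⁻¹) * ((x - x⁻¹) * (cheb K (k+1)).eval (x + x⁻¹))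
          - (x - x⁻¹) * (cheb K k).eval (x + x⁻¹) := by ring
    rw [this, ih2, ih1]
    linear_combination (x ^ (k+1) - x⁻¹ ^ (k+1)) * hxx
open Polynomial Finset

lemma prod_Ioi_rev {K : Type*} [CommRing K] {n : ℕ} (v : Fin n → K) :
    (∏ i, ∏ j ∈ Finset.Ioi i, (v (Fin.rev j) - v (Fin.rev i)))
      = ∏ i, ∏ j ∈ Finset.Ioi i, (v i - v j) := by
  rw [Finset.prod_sigma', Finset.prod_sigma']
  refine Finset.prod_bij' (fun p _ => ⟨Fin.rev p.2, Fin.rev p.1⟩)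
    (fun p _ => ⟨Fin.rev p.2, Fin.rev p.1⟩) ?_ ?_ ?_ ?_ ?_
  · intro p hp
    simp only [Finset.mem_sigma, Finset.mem_univ, Finset.mem_Ioi, true_and] at hp ⊢
    exact Fin.rev_lt_rev.mpr hp
  · intro p hp
    simp only [Finset.mem_sigma, Finset.mem_univ, Finset.mem_Ioi, true_and] at hp ⊢
    exact Fin.rev_lt_rev.mpr hp
  · intro p hp; simp [Fin.rev_rev]
  · intro p hp; simp [Fin.rev_rev]
  · intro p hp; simp [Fin.rev_rev]

lemma weyl_denom {K : Type*} [Field K] {n : ℕ} (x : Fin n → K) (hx : ∀ i, x i ≠ 0) :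
    (Matrix.of fun i j : Fin n => x i ^ (n - (j : ℕ)) - (x i)⁻¹ ^ (n - (j : ℕ))).det
      = (∏ i, (x i - (x i)⁻¹)) *
          ∏ i, ∏ j ∈ Finset.Ioi i, (x i + (x i)⁻¹ - x j - (x j)⁻¹) := by
  set z : Fin n → K := fun i => x i + (x i)⁻¹ with hz
  have hmat : (Matrix.of fun i j : Fin n => x i ^ (n - (j : ℕ)) - (x i)⁻¹ ^ (n - (j : ℕ)))
      = Matrix.of fun i j : Fin n => (x i - (x i)⁻¹) * (cheb K (n - 1 - (j : ℕ))).eval (z i) := by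
    ext i j
    simp only [Matrix.of_apply]
    rw [cheb_eval (x i) (hx i)]
    have : n - 1 - (j : ℕ) + 1 = n - (j : ℕ) := by omega
    rw [this]
  rw [hmat]
  have hdmc := Matrix.det_mul_column (fun i => x i - (x i)⁻¹)
    (Matrix.of fun i j : Fin n => (cheb K (n - 1 - (j : ℕ))).eval (z i))
  simp only [Matrix.of_apply] at hdmc
  rw [hdmc]
  congr 1
  show (Matrix.of fun i j : Fin n => (cheb K (n - 1 - (j : ℕ))).eval (z i)).det = _
  have hsub : (Matrix.of fun i j : Fin n => (cheb K (n - 1 - (j : ℕ))).eval (z i)).submatrix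
      Fin.revPerm Fin.revPerm
      = Matrix.of fun i j : Fin n => (cheb K (j : ℕ)).eval (z (Fin.rev i)) := by
    ext i j
    simp only [Matrix.submatrix_apply, Matrix.of_apply]
    congr 2
    · simp [Fin.revPerm]
      omega
  have h1 : (Matrix.of fun i j : Fin n => (cheb K (n - 1 - (j : ℕ))).eval (z i)).det
      = (Matrix.of fun i j : Fin n => (cheb K (j : ℕ)).eval (z (Fin.rev i))).det := by
    rw [← hsub, Matrix.det_submatrix_equiv_self]
  rw [h1]
  have h2 : (Matrix.of fun i j : Fin n => (cheb K (j : ℕ)).eval (z (Fin.rev i))).det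
      = (Matrix.vandermonde (fun i => z (Fin.rev i))).det := by
    rw [Matrix.det_eval_matrixOfPolynomials_eq_det_vandermonde (fun i => z (Fin.rev i))
      (fun j : Fin n => cheb K (j : ℕ)) (fun j => (cheb_monic_deg K j).2)
      (fun j => (cheb_monic_deg K j).1)]
  rw [h2, Matrix.det_vandermonde]
  rw [prod_Ioi_rev z]
  refine Finset.prod_congr rfl fun i _ => Finset.prod_congr rfl fun j _ => ?_
  simp [hz]
  ring
open Finset Equiv

lemma det_expand {K : Type*} [CommRing K] {n : ℕ} (y : K) (P Q : Fin n → Fin n → K) :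
    (Matrix.of fun i j => P i j + y * Q i j).det
      = ∑ S : Finset (Fin n), y ^ S.card *
          (Matrix.of fun i j => if j ∈ S then Q i j else P i j).det := by
  simp only [Matrix.det_apply, Matrix.of_apply]
  calc (∑ σ : Perm (Fin n), Perm.sign σ • ∏ i, (P (σ i) i + y * Q (σ i) i))
      = ∑ σ : Perm (Fin n), ∑ S : Finset (Fin n),
          y ^ S.card * (Perm.sign σ • ∏ i, (if i ∈ S then Q (σ i) i else P (σ i) i)) := by
        refine Finset.sum_congr rfl fun σ _ => ?_
        have hexp : (∏ i, (P (σ i) i + y * Q (σ i) i))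
            = ∑ S : Finset (Fin n), y ^ S.card *
                ∏ i, (if i ∈ S then Q (σ i) i else P (σ i) i) := by
          have h0 := Finset.prod_add (fun i => y * Q (σ i) i) (fun i => P (σ i) i) Finset.univ
          simp only [Finset.powerset_univ] at h0
          calc (∏ i, (P (σ i) i + y * Q (σ i) i))
              = ∏ i, (y * Q (σ i) i + P (σ i) i) :=
                Finset.prod_congr rfl fun i _ => add_comm _ _
            _ = ∑ S : Finset (Fin n), (∏ i ∈ S, (y * Q (σ i) i)) *
                  ∏ i ∈ Finset.univ \ S, P (σ i) i := h0
            _ = _ := by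
                refine Finset.sum_congr rfl fun S _ => ?_
                rw [Finset.prod_mul_distrib, Finset.prod_const, Finset.prod_ite]
                rw [Finset.filter_mem_eq_inter, Finset.univ_inter, mul_assoc]
                congr 2
                apply Finset.prod_congr _ fun i _ => rfl
                ext i
                simp
        rw [hexp, Finset.smul_sum]
        exact Finset.sum_congr rfl fun S _ => (mul_smul_comm _ _ _).symm
    _ = ∑ S : Finset (Fin n), ∑ σ : Perm (Fin n),
          y ^ S.card * (Perm.sign σ • ∏ i, (if i ∈ S then Q (σ i) i else P (σ i) i)) :=
        Finset.sum_comm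
    _ = _ := by
        refine Finset.sum_congr rfl fun S _ => ?_
        rw [← Finset.mul_sum]
open Finset Equiv

lemma det_onevar {K : Type*} [CommRing K] {N : ℕ} (y : K) (a b : Fin N → ℤ)
    (ha : StrictAnti a) (hb : StrictAnti b) :
    (Matrix.of fun i j : Fin N => if a i - b j < 0 then 0 else y ^ (a i - b j).toNat).det
      = if (∀ i, b i ≤ a i) ∧ (∀ i j : Fin N, (j : ℕ) = (i : ℕ) + 1 → a j < b i)
        then y ^ (∑ i, (a i - b i)).toNat else 0 := by
  set T : ℕ := (∑ i, (a i - b i)).toNat with hT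
  set B : Matrix (Fin N) (Fin N) K :=
    Matrix.of (fun i j : Fin N => if a i - b j < 0 then (0:K) else 1) with hB
  -- Step 1: factor out y^T
  have hfactor : (Matrix.of fun i j : Fin N =>
      if a i - b j < 0 then 0 else y ^ (a i - b j).toNat).det = y ^ T * B.det := by
    rw [Matrix.det_apply, Matrix.det_apply, Finset.mul_sum]
    refine Finset.sum_congr rfl fun σ _ => ?_
    rw [mul_smul_comm]
    congr 1
    by_cases hv : ∀ i, 0 ≤ a (σ i) - b i
    · have h1 : ∀ i : Fin N, (Matrix.of fun i j : Fin N =>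
          if a i - b j < 0 then 0 else y ^ (a i - b j).toNat) (σ i) i
            = y ^ (a (σ i) - b i).toNat := fun i => if_neg (not_lt.mpr (hv i))
      have h2 : ∀ i : Fin N, B (σ i) i = 1 := fun i => if_neg (not_lt.mpr (hv i))
      rw [Finset.prod_congr rfl fun i _ => h1 i, Finset.prod_congr rfl fun i _ => h2 i,
        Finset.prod_const_one, mul_one, Finset.prod_pow_eq_pow_sum]
      congr 1
      have hc : ((∑ i, (a (σ i) - b i).toNat : ℕ) : ℤ) = ∑ i, (a i - b i) := by
        push_cast
        rw [Finset.sum_congr rfl fun i _ => Int.toNat_of_nonneg (hv i)]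
        rw [Finset.sum_sub_distrib, Finset.sum_sub_distrib]
        congr 1
        exact Equiv.sum_comp σ a
      rw [hT, ← hc, Int.toNat_natCast]
    · push_neg at hv
      obtain ⟨i, hi⟩ := hv
      rw [Finset.prod_eq_zero (Finset.mem_univ i), Finset.prod_eq_zero (Finset.mem_univ i),
        mul_zero]
      · exact if_pos hi
      · exact if_pos hi
  rw [hfactor]
  by_cases hcont : ∀ i, b i ≤ a i
  · by_cases hstrip : ∀ i j : Fin N, (j : ℕ) = (i : ℕ) + 1 → a j < b i
    · rw [if_pos ⟨hcont, hstrip⟩]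
      have hdB : B.det = 1 := by
        have htri : B.BlockTriangular id := by
          intro i j hij
          refine if_pos ?_
          have hji : (j : ℕ) < (i : ℕ) := hij
          have hjN : (j : ℕ) + 1 < N := by omega
          set j1 : Fin N := ⟨(j : ℕ) + 1, hjN⟩ with hj1def
          have hj1v : (j1 : ℕ) = (j : ℕ) + 1 := rfl
          have hj1 : a j1 < b j := hstrip j j1 hj1v
          have hle : a i ≤ a j1 := ha.antitone (Fin.le_def.mpr (by omega))
          omega
        rw [Matrix.det_of_upperTriangular htri]
        refine Finset.prod_eq_one fun i _ => if_neg (not_lt.mpr (by have := hcont i; omega))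
      rw [hdB, mul_one]
    · rw [if_neg (by tauto)]
      -- minimal failure of the strip condition
      set F : Finset (Fin N) :=
        Finset.univ.filter (fun i : Fin N => ∃ j : Fin N, (j : ℕ) = (i : ℕ) + 1 ∧ b i ≤ a j)
        with hF
      have hFne : F.Nonempty := by
        push_neg at hstrip
        obtain ⟨i, j, hij, hba⟩ := hstrip
        exact ⟨i, Finset.mem_filter.mpr ⟨Finset.mem_univ _, j, hij, hba⟩⟩
      obtain ⟨p, hpmem, hpmin⟩ :
          ∃ p : Fin N, p ∈ F ∧ ∀ k, k ∈ F → p ≤ k :=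
        ⟨F.min' hFne, F.min'_mem hFne, fun k hk => F.min'_le k hk⟩
      obtain ⟨-, j, hj1, hba⟩ := Finset.mem_filter.mp hpmem
      have hpj : p < j := Fin.lt_def.mpr (by omega)
      have hrows : B p = B j := by
        funext k
        by_cases hk : p ≤ k
        · have hbk : b k ≤ b p := hb.antitone hk
          have haj : a j ≤ a p := ha.antitone hpj.le
          have e1 : B p k = 1 := if_neg (not_lt.mpr (by omega))
          have e2 : B j k = 1 := if_neg (not_lt.mpr (by omega))
          rw [e1, e2]
        · push_neg at hk
          have hkv : (k : ℕ) < (p : ℕ) := hk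
          have hjv : (p : ℕ) < (j : ℕ) := hpj
          have hkN : (k : ℕ) + 1 < N := by omega
          set k1 : Fin N := ⟨(k : ℕ) + 1, hkN⟩ with hk1def
          have hk1v : (k1 : ℕ) = (k : ℕ) + 1 := rfl
          have hknotF : k ∉ F := fun hkF => absurd (hpmin k hkF) (not_le.mpr hk)
          have hak : a k1 < b k := by
            by_contra hle
            exact hknotF (Finset.mem_filter.mpr ⟨Finset.mem_univ _, k1, hk1v, not_lt.mp hle⟩)
          have hap : a p ≤ a k1 := ha.antitone (Fin.le_def.mpr (by omega))
          have haj : a j ≤ a p := ha.antitone hpj.le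
          have e1 : B p k = 0 := if_pos (by omega)
          have e2 : B j k = 0 := if_pos (by omega)
          rw [e1, e2]
      rw [Matrix.det_zero_of_row_eq hpj.ne hrows, mul_zero]
  · rw [if_neg (by tauto)]
    push_neg at hcont
    obtain ⟨i0, hi0⟩ := hcont
    have hdB : B.det = 0 := by
      rw [Matrix.det_apply]
      refine Finset.sum_eq_zero fun σ _ => ?_
      have hex : ∃ j, j ≤ i0 ∧ i0 ≤ σ j := by
        by_contra hcon
        push_neg at hcon
        have hmaps : ∀ j ∈ Finset.Iic i0, σ j ∈ Finset.Iio i0 := fun j hj =>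
          Finset.mem_Iio.mpr (hcon j (Finset.mem_Iic.mp hj))
        have hcard := Finset.card_le_card_of_injOn σ hmaps (σ.injective.injOn)
        rw [Fin.card_Iic, Fin.card_Iio] at hcard
        omega
      obtain ⟨j, hji, hij⟩ := hex
      rw [Finset.prod_eq_zero (Finset.mem_univ j), smul_zero]
      refine if_pos ?_
      have h1 : a (σ j) ≤ a i0 := ha.antitone hij
      have h2 : b i0 ≤ b j := hb.antitone hji
      omega
    rw [hdB, mul_zero]
open Finset

def cnt (f : ℕ → ℕ) (n k : ℕ) : ℕ := ((Finset.range n).filter fun t => k ≤ f t).card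

lemma cnt_anti (f : ℕ → ℕ) (n : ℕ) {k k' : ℕ} (h : k ≤ k') : cnt f n k' ≤ cnt f n k := by
  refine Finset.card_le_card fun t ht => ?_
  obtain ⟨h1, h2⟩ := Finset.mem_filter.mp ht
  exact Finset.mem_filter.mpr ⟨h1, le_trans h h2⟩

lemma cnt_mono_f {f g : ℕ → ℕ} (n k : ℕ) (h : ∀ t, g t ≤ f t) : cnt g n k ≤ cnt f n k := by
  refine Finset.card_le_card fun t ht => ?_
  obtain ⟨h1, h2⟩ := Finset.mem_filter.mp ht
  exact Finset.mem_filter.mpr ⟨h1, le_trans h2 (h t)⟩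

lemma cnt_eq_card_univ {n : ℕ} (k : ℕ) (F : Fin n → ℕ) :
    (Finset.univ.filter fun t : Fin n => k ≤ F t).card
      = cnt (fun t => if h : t < n then F ⟨t, h⟩ else 0) n k := by
  rw [cnt, Finset.card_filter, Finset.card_filter]
  rw [← Fin.sum_univ_eq_sum_range (fun t =>
    if k ≤ (if h : t < n then F ⟨t, h⟩ else 0) then 1 else 0) n]
  refine Finset.sum_congr rfl fun t _ => ?_
  congr 1
  rw [dif_pos t.2]

lemma sum_cnt (f : ℕ → ℕ) (n M : ℕ) (h : ∀ t, t < n → f t ≤ M) :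
    ∑ i ∈ Finset.range M, cnt f n (i+1) = ∑ t ∈ Finset.range n, f t := by
  unfold cnt
  simp only [Finset.card_filter]
  rw [Finset.sum_comm]
  refine Finset.sum_congr rfl fun t ht => ?_
  have hft : f t ≤ M := h t (Finset.mem_range.mp ht)
  rw [← Finset.card_filter]
  have : (Finset.range M).filter (fun i => i + 1 ≤ f t) = Finset.range (f t) := by
    ext a
    simp only [Finset.mem_filter, Finset.mem_range]
    omega
  rw [this, Finset.card_range]

lemma strip_iff (n : ℕ) (lam G : ℕ → ℕ) (hA : Antitone lam) (hGanti : Antitone G)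
    (hle : ∀ t, G t ≤ lam t) (hlen : ∀ t, n ≤ t → lam t = 0) :
    (∀ p : ℕ, p + 1 < lam 0 → cnt lam n (p+2) ≤ cnt G n (p+1)) ↔ ∀ t, lam t ≤ G t + 1 := by
  constructor
  · intro h t
    by_contra hc
    push_neg at hc
    have hc' : G t + 2 ≤ lam t := by omega
    have htn : t < n := by
      by_contra htn
      push_neg at htn
      have := hlen t htn
      omega
    have hl0 : lam t ≤ lam 0 := hA (Nat.zero_le t)
    have hp : lam t - 2 + 1 < lam 0 := by omega
    have h1 := h (lam t - 2) hp
    rw [show lam t - 2 + 2 = lam t by omega, show lam t - 2 + 1 = lam t - 1 by omega] at h1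
    have hc1 : t + 1 ≤ cnt lam n (lam t) := by
      have hsub : Finset.range (t+1) ⊆ (Finset.range n).filter fun s => lam t ≤ lam s := by
        intro s hs
        rw [Finset.mem_range] at hs
        refine Finset.mem_filter.mpr ⟨Finset.mem_range.mpr (by omega), hA (by omega)⟩
      have := Finset.card_le_card hsub
      rw [Finset.card_range] at this
      exact this
    have hc2 : cnt G n (lam t - 1) ≤ t := by
      have hsub : ((Finset.range n).filter fun s => lam t - 1 ≤ G s) ⊆ Finset.range t := by
        intro s hs
        obtain ⟨-, hs2⟩ := Finset.mem_filter.mp hs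
        rw [Finset.mem_range]
        by_contra hst
        push_neg at hst
        have := hGanti hst
        omega
      have := Finset.card_le_card hsub
      rw [Finset.card_range] at this
      exact this
    omega
  · intro h p _
    refine Finset.card_le_card fun t ht => ?_
    obtain ⟨h1, h2⟩ := Finset.mem_filter.mp ht
    refine Finset.mem_filter.mpr ⟨h1, ?_⟩
    have := h t
    omega

lemma sum_ab (M n : ℕ) (f G : ℕ → ℕ) (hfM : ∀ t, t < n → f t ≤ M) (hGf : ∀ t, G t ≤ f t) :
    (∑ i : Fin M, ((((cnt f n ((i : ℕ)+1) : ℤ) - (i : ℕ)) - ((cnt G n ((i : ℕ)+1) : ℤ) - (i : ℕ))))).toNat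
      = ∑ t ∈ Finset.range n, (f t - G t) := by
  have h1 : (∑ i : Fin M, ((((cnt f n ((i : ℕ)+1) : ℤ) - (i : ℕ)) - ((cnt G n ((i : ℕ)+1) : ℤ) - (i : ℕ)))))
      = ((∑ t ∈ Finset.range n, f t : ℕ) : ℤ) - ((∑ t ∈ Finset.range n, G t : ℕ) : ℤ) := by
    have e1 : ∀ i : Fin M, (((cnt f n ((i : ℕ)+1) : ℤ) - (i : ℕ)) - ((cnt G n ((i : ℕ)+1) : ℤ) - (i : ℕ)))
        = (cnt f n ((i : ℕ)+1) : ℤ) - (cnt G n ((i : ℕ)+1) : ℤ) := fun i => by ring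
    have hf : (∑ i : Fin M, (cnt f n ((i : ℕ)+1) : ℤ)) = ((∑ t ∈ Finset.range n, f t : ℕ) : ℤ) := by
      rw [Fin.sum_univ_eq_sum_range (fun i => (cnt f n (i+1) : ℤ)) M, ← Nat.cast_sum,
        sum_cnt f n M hfM]
    have hg : (∑ i : Fin M, (cnt G n ((i : ℕ)+1) : ℤ)) = ((∑ t ∈ Finset.range n, G t : ℕ) : ℤ) := by
      rw [Fin.sum_univ_eq_sum_range (fun i => (cnt G n (i+1) : ℤ)) M, ← Nat.cast_sum,
        sum_cnt G n M (fun t ht => le_trans (hGf t) (hfM t ht))]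
    rw [Finset.sum_congr rfl fun i _ => e1 i, Finset.sum_sub_distrib, hf, hg]
  rw [h1]
  have hle : ∑ t ∈ Finset.range n, G t ≤ ∑ t ∈ Finset.range n, f t :=
    Finset.sum_le_sum fun t _ => hGf t
  have hs := Finset.sum_tsub_distrib (Finset.range n) (f := f) (g := G) (fun t _ => hGf t)
  omega
open Finset

lemma fin_antitone_of_adj {n : ℕ} (f : Fin n → ℕ)
    (h : ∀ (p : ℕ) (hp : p + 1 < n), f ⟨p+1, hp⟩ ≤ f ⟨p, Nat.lt_of_succ_lt hp⟩) :
    ∀ i j : Fin n, i ≤ j → f j ≤ f i := by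
  have key : ∀ d : ℕ, ∀ i j : Fin n, (j : ℕ) = (i : ℕ) + d → f j ≤ f i := by
    intro d
    induction d with
    | zero =>
      intro i j hij
      have : i = j := Fin.ext (by omega)
      rw [this]
    | succ d ih =>
      intro i j hij
      have hjn : (i : ℕ) + d + 1 < n := by have := j.isLt; omega
      have h1 := h ((i : ℕ) + d) hjn
      have h2 := ih i ⟨(i : ℕ) + d, Nat.lt_of_succ_lt hjn⟩ rfl
      have hje : j = ⟨(i : ℕ) + d + 1, hjn⟩ := by
        apply Fin.ext
        simp only [Fin.val_mk]
        omega
      rw [hje]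
      exact le_trans h1 h2
  intro i j hij
  exact key ((j : ℕ) - (i : ℕ)) i j (by have := Fin.le_def.mp hij; omega)
def GF {n : ℕ} {lam : ℕ → ℕ} (g : (i : Fin n) → Fin (lam i + 1)) : ℕ → ℕ :=
  fun t => if h : t < n then (g ⟨t, h⟩ : ℕ) else 0

def gfn (lam : ℕ → ℕ) {n : ℕ} (S : Finset (Fin n)) : (i : Fin n) → Fin (lam i + 1) :=
  fun i => ⟨lam i - (if i ∈ S then 1 else 0), Nat.lt_succ_of_le (Nat.sub_le _ _)⟩

def Sfn {n : ℕ} {lam : ℕ → ℕ} (g : (i : Fin n) → Fin (lam i + 1)) : Finset (Fin n) :=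
  Finset.univ.filter (fun t : Fin n => (g t : ℕ) < lam (t : ℕ))

def Valid {n : ℕ} {lam : ℕ → ℕ} (g : (i : Fin n) → Fin (lam i + 1)) : Prop :=
  (∀ i j : Fin n, i ≤ j → ((g j : ℕ) ≤ (g i : ℕ))) ∧
    ∀ t : Fin n, lam (t : ℕ) ≤ (g t : ℕ) + 1

def Ok {n : ℕ} (lam : ℕ → ℕ) (S : Finset (Fin n)) : Prop :=
  (∀ j : Fin n, j ∈ S → 1 ≤ lam (j : ℕ)) ∧
    ∀ i j : Fin n, i ≤ j → ((gfn lam S j : ℕ) ≤ (gfn lam S i : ℕ))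

noncomputable def NumMat {K : Type*} [Field K] {n : ℕ} (x : Fin n → K) {lam : ℕ → ℕ}
    (g : (i : Fin n) → Fin (lam i + 1)) : K :=
  (Matrix.of fun i j : Fin n =>
    x i ^ ((g j : ℕ) + (n - (j : ℕ))) - (x i)⁻¹ ^ ((g j : ℕ) + (n - (j : ℕ)))).det

noncomputable def DD {K : Type*} [Field K] {n : ℕ} (x : Fin n → K) : K :=
  (∏ i, (x i - (x i)⁻¹)) * ∏ i, ∏ j ∈ Finset.Ioi i, (x i + (x i)⁻¹ - x j - (x j)⁻¹)

noncomputable def XX {K : Type*} [Field K] {n : ℕ} (x : Fin n → K) (lam : ℕ → ℕ) (y : K)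
    (g : (i : Fin n) → Fin (lam i + 1)) : K :=
  y ^ (∑ t ∈ Finset.range n, (lam t - GF g t)) * NumMat x g / DD x

lemma gfn_val (lam : ℕ → ℕ) {n : ℕ} (S : Finset (Fin n)) (i : Fin n) :
    (gfn lam S i : ℕ) = lam (i : ℕ) - (if i ∈ S then 1 else 0) := rfl

lemma GF_lt {n : ℕ} {lam : ℕ → ℕ} (g : (i : Fin n) → Fin (lam i + 1)) (t : Fin n) :
    GF g (t : ℕ) = (g t : ℕ) := by
  rw [GF, dif_pos t.isLt]

lemma GF_le_lam {n : ℕ} {lam : ℕ → ℕ} (g : (i : Fin n) → Fin (lam i + 1)) (t : ℕ) :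
    GF g t ≤ lam t := by
  rw [GF]
  split
  · next h =>
    have := (g ⟨t, h⟩).isLt
    simp only [Fin.val_mk] at this
    omega
  · exact Nat.zero_le _

lemma GF_anti {n : ℕ} {lam : ℕ → ℕ} (g : (i : Fin n) → Fin (lam i + 1))
    (hant : ∀ i j : Fin n, i ≤ j → ((g j : ℕ) ≤ (g i : ℕ))) : Antitone (GF g) := by
  apply antitone_nat_of_succ_le
  intro t
  rw [GF, GF]
  by_cases h1 : t + 1 < n
  · rw [dif_pos h1, dif_pos (Nat.lt_of_succ_lt h1)]
    exact hant ⟨t, Nat.lt_of_succ_lt h1⟩ ⟨t+1, h1⟩ (by simp [Fin.le_def])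
  · rw [dif_neg h1]
    exact Nat.zero_le _

lemma gfn_Sfn {n : ℕ} {lam : ℕ → ℕ} (g : (i : Fin n) → Fin (lam i + 1)) (hg : Valid g) :
    gfn lam (Sfn g) = g := by
  funext i
  apply Fin.ext
  rw [gfn_val]
  have h1 := (g i).isLt
  have h2 := hg.2 i
  by_cases h : (g i : ℕ) < lam (i : ℕ)
  · have : i ∈ Sfn g := Finset.mem_filter.mpr ⟨Finset.mem_univ _, h⟩
    rw [if_pos this]
    omega
  · have : i ∉ Sfn g := fun hc => h (Finset.mem_filter.mp hc).2
    rw [if_neg this]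
    omega

lemma Sfn_gfn {n : ℕ} {lam : ℕ → ℕ} (S : Finset (Fin n)) (hok : Ok lam S) :
    Sfn (gfn lam S) = S := by
  ext j
  rw [Sfn, Finset.mem_filter, gfn_val]
  by_cases hj : j ∈ S
  · have := hok.1 j hj
    simp only [if_pos hj]
    exact ⟨fun _ => hj, fun _ => ⟨Finset.mem_univ _, by omega⟩⟩
  · simp only [if_neg hj]
    exact ⟨fun h => absurd h.2 (by omega), fun h => absurd h hj⟩

lemma Ok_Sfn {n : ℕ} {lam : ℕ → ℕ} (g : (i : Fin n) → Fin (lam i + 1)) (hg : Valid g) :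
    Ok lam (Sfn g) := by
  constructor
  · intro j hj
    have := (Finset.mem_filter.mp hj).2
    omega
  · simp only [gfn_Sfn g hg]
    exact hg.1

lemma Valid_gfn {n : ℕ} {lam : ℕ → ℕ} (S : Finset (Fin n)) (hok : Ok lam S) :
    Valid (gfn lam S) := by
  refine ⟨hok.2, fun t => ?_⟩
  rw [gfn_val]
  by_cases ht : t ∈ S
  · have := hok.1 t ht
    rw [if_pos ht]
    omega
  · rw [if_neg ht]
    omega

lemma card_Sfn {n : ℕ} {lam : ℕ → ℕ} (S : Finset (Fin n))
    (h1 : ∀ j : Fin n, j ∈ S → 1 ≤ lam (j : ℕ)) :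
    S.card = ∑ t ∈ Finset.range n, (lam t - GF (gfn lam S) t) := by
  rw [← Fin.sum_univ_eq_sum_range (fun t => lam t - GF (gfn lam S) t) n]
  have he : ∀ t : Fin n, lam (t : ℕ) - GF (gfn lam S) (t : ℕ) = if t ∈ S then 1 else 0 := by
    intro t
    rw [GF_lt, gfn_val]
    by_cases ht : t ∈ S
    · have := h1 t ht
      rw [if_pos ht]
      omega
    · rw [if_neg ht]
      omega
  rw [Finset.sum_congr rfl (fun t _ => he t), Finset.sum_ite_mem, Finset.univ_inter,
    Finset.sum_const, smul_eq_mul, mul_one]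

lemma detR_eq {K : Type*} [Field K] {n : ℕ} (x : Fin n → K) (lam : ℕ → ℕ) (S : Finset (Fin n))
    (h1 : ∀ j : Fin n, j ∈ S → 1 ≤ lam (j : ℕ)) :
    (Matrix.of fun i j : Fin n =>
      if j ∈ S then
        x i ^ (lam (j : ℕ) + (n - 1 - (j : ℕ))) - (x i)⁻¹ ^ (lam (j : ℕ) + (n - 1 - (j : ℕ)))
      else
        x i ^ (lam (j : ℕ) + (n - (j : ℕ))) - (x i)⁻¹ ^ (lam (j : ℕ) + (n - (j : ℕ)))).det
      = NumMat x (gfn lam S) := by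
  rw [NumMat]
  congr 1
  ext i k
  simp only [Matrix.of_apply, gfn_val]
  by_cases hk : k ∈ S
  · rw [if_pos hk, if_pos hk]
    have hkn := k.isLt
    have hl := h1 k hk
    have he : lam (k : ℕ) + (n - 1 - (k : ℕ)) = lam (k : ℕ) - 1 + (n - (k : ℕ)) := by omega
    rw [he]
  · rw [if_neg hk, if_neg hk]
    have he : lam (k : ℕ) + (n - (k : ℕ)) = lam (k : ℕ) - 0 + (n - (k : ℕ)) := by omega
    rw [he]

lemma detR_zero {K : Type*} [Field K] {n : ℕ} (x : Fin n → K) (lam : ℕ → ℕ)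
    (hA : Antitone lam) (S : Finset (Fin n)) (hok : ¬ Ok lam S) :
    (Matrix.of fun i j : Fin n =>
      if j ∈ S then
        x i ^ (lam (j : ℕ) + (n - 1 - (j : ℕ))) - (x i)⁻¹ ^ (lam (j : ℕ) + (n - 1 - (j : ℕ)))
      else
        x i ^ (lam (j : ℕ) + (n - (j : ℕ))) - (x i)⁻¹ ^ (lam (j : ℕ) + (n - (j : ℕ)))).det
      = 0 := by
  by_cases h1 : ∀ j : Fin n, j ∈ S → 1 ≤ lam (j : ℕ)
  · -- the induced `g` is not antitone: adjacent violation gives equal columns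
    have h2 : ¬ ∀ i j : Fin n, i ≤ j → ((gfn lam S j : ℕ) ≤ (gfn lam S i : ℕ)) :=
      fun h => hok ⟨h1, h⟩
    have hadj : ∃ (p : ℕ) (hp : p + 1 < n),
        ((gfn lam S ⟨p, Nat.lt_of_succ_lt hp⟩ : ℕ) < (gfn lam S ⟨p+1, hp⟩ : ℕ)) := by
      by_contra hcon
      push_neg at hcon
      exact h2 (fin_antitone_of_adj (fun t => (gfn lam S t : ℕ)) (fun p hp => hcon p hp))
    obtain ⟨p, hp, hviol⟩ := hadj
    set jp : Fin n := ⟨p, Nat.lt_of_succ_lt hp⟩ with hjp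
    set jq : Fin n := ⟨p+1, hp⟩ with hjq
    have hvp : (gfn lam S jp : ℕ) = lam p - (if jp ∈ S then 1 else 0) := rfl
    have hvq : (gfn lam S jq : ℕ) = lam (p+1) - (if jq ∈ S then 1 else 0) := rfl
    have hlam : lam (p+1) ≤ lam p := hA (Nat.le_succ p)
    have hmem : jp ∈ S ∧ jq ∉ S ∧ lam p = lam (p+1) := by
      by_cases hmp : jp ∈ S <;> by_cases hmq : jq ∈ S
      · rw [if_pos hmp] at hvp; rw [if_pos hmq] at hvq
        have := h1 jq hmq
        exact absurd hviol (not_lt.mpr (by omega))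
      · rw [if_pos hmp] at hvp; rw [if_neg hmq] at hvq
        have := h1 jp hmp
        exact ⟨hmp, hmq, by omega⟩
      · rw [if_neg hmp] at hvp; rw [if_pos hmq] at hvq
        have := h1 jq hmq
        exact absurd hviol (not_lt.mpr (by omega))
      · rw [if_neg hmp] at hvp; rw [if_neg hmq] at hvq
        exact absurd hviol (not_lt.mpr (by omega))
    obtain ⟨hmp, hmq, hll⟩ := hmem
    refine Matrix.det_zero_of_column_eq (show jp ≠ jq by
      intro h
      have : p = p + 1 := congrArg Fin.val h
      omega) (fun k => ?_)
    simp only [Matrix.of_apply, if_pos hmp, if_neg hmq]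
    have hvjp : (jp : ℕ) = p := rfl
    have hvjq : (jq : ℕ) = p + 1 := rfl
    have he : lam (jp : ℕ) + (n - 1 - (jp : ℕ)) = lam (jq : ℕ) + (n - (jq : ℕ)) := by
      rw [hvjp, hvjq]
      omega
    rw [he]
  · push_neg at h1
    obtain ⟨j, hjS, hj1⟩ := h1
    have hj0 : lam (j : ℕ) = 0 := by omega
    by_cases hall : ∀ t : Fin n, j ≤ t → t ∈ S
    · have hn : 0 < n := lt_of_le_of_lt (Nat.zero_le _) j.isLt
      obtain ⟨tl, hvtl⟩ : ∃ tl : Fin n, (tl : ℕ) = n - 1 := ⟨⟨n-1, by omega⟩, rfl⟩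
      have hjtl : j ≤ tl := Fin.le_def.mpr (by have := j.isLt; omega)
      have htlS : tl ∈ S := hall tl hjtl
      have hltl : lam (tl : ℕ) = 0 := by
        have := hA (Fin.le_def.mp hjtl)
        omega
      refine Matrix.det_eq_zero_of_column_eq_zero tl (fun i => ?_)
      simp only [Matrix.of_apply, if_pos htlS]
      have he : lam (tl : ℕ) + (n - 1 - (tl : ℕ)) = 0 := by omega
      rw [he, pow_zero, pow_zero, sub_self]
    · push_neg at hall
      obtain ⟨t, hjt, htS⟩ := hall
      set F : Finset (Fin n) := Finset.univ.filter (fun s : Fin n => j ≤ s ∧ s ∉ S) with hF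
      have hFne : F.Nonempty := ⟨t, Finset.mem_filter.mpr ⟨Finset.mem_univ _, hjt, htS⟩⟩
      obtain ⟨t0, ht0mem, ht0min⟩ :
          ∃ t0 : Fin n, t0 ∈ F ∧ ∀ k, k ∈ F → t0 ≤ k :=
        ⟨F.min' hFne, F.min'_mem hFne, fun k hk => F.min'_le k hk⟩
      obtain ⟨-, hjt0, ht0S⟩ := Finset.mem_filter.mp ht0mem
      have hjlt : j < t0 := lt_of_le_of_ne hjt0 (fun h => ht0S (h ▸ hjS))
      have hvj : (j : ℕ) < (t0 : ℕ) := hjlt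
      obtain ⟨t1, hvt1⟩ : ∃ t1 : Fin n, (t1 : ℕ) = (t0 : ℕ) - 1 :=
        ⟨⟨(t0 : ℕ) - 1, by have := t0.isLt; omega⟩, rfl⟩
      have hjt1 : j ≤ t1 := Fin.le_def.mpr (by omega)
      have ht1S : t1 ∈ S := by
        by_contra h
        have hmem1 : t1 ∈ F := Finset.mem_filter.mpr ⟨Finset.mem_univ _, hjt1, h⟩
        have := Fin.le_def.mp (ht0min t1 hmem1)
        rw [hvt1] at this
        omega
      have hlam1 : lam (t1 : ℕ) = 0 := by
        have := hA (Fin.le_def.mp hjt1)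
        omega
      have hlam0 : lam (t0 : ℕ) = 0 := by
        have := hA (le_of_lt hvj)
        omega
      refine Matrix.det_zero_of_column_eq (show t1 ≠ t0 by
        intro h
        have : (t1 : ℕ) = (t0 : ℕ) := congrArg Fin.val h
        omega) (fun k => ?_)
      simp only [Matrix.of_apply, if_pos ht1S, if_neg ht0S]
      have he : lam (t1 : ℕ) + (n - 1 - (t1 : ℕ)) = lam (t0 : ℕ) + (n - (t0 : ℕ)) := by
        have := t0.isLt
        omega
      rw [he]


lemma JT_eval {K : Type*} [Field K] (n : ℕ) (lam : ℕ → ℕ) (hA : Antitone lam)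
    (hlen : ∀ i, n ≤ i → lam i = 0) (y : K) (g : (i : Fin n) → Fin (lam i + 1))
    (hant : ∀ i j : Fin n, i ≤ j → ((g j : ℕ) ≤ (g i : ℕ))) :
    (Matrix.of fun i j : Fin (lam 0) =>
        hInt ![y]
          (((((Finset.range n).filter fun t => (i : ℕ) + 1 ≤ lam t).card : ℤ))
            - (((Finset.univ : Finset (Fin n)).filter fun t => (j : ℕ) + 1 ≤ (g t : ℕ)).card : ℤ)
            - (i : ℕ) + (j : ℕ))).det
      = if (∀ t : Fin n, lam (t : ℕ) ≤ (g t : ℕ) + 1)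
        then y ^ (∑ t ∈ Finset.range n, (lam t - GF g t)) else 0 := by
  have hGle : ∀ t, GF g t ≤ lam t := GF_le_lam g
  have hGanti : Antitone (GF g) := GF_anti g hant
  set aa : Fin (lam 0) → ℤ := fun i => (cnt lam n ((i : ℕ)+1) : ℤ) - (i : ℕ) with haa
  set bb : Fin (lam 0) → ℤ := fun j => (cnt (GF g) n ((j : ℕ)+1) : ℤ) - (j : ℕ) with hbb
  have hmat : (Matrix.of fun i j : Fin (lam 0) =>
      hInt ![y]
        (((((Finset.range n).filter fun t => (i : ℕ) + 1 ≤ lam t).card : ℤ))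
          - (((Finset.univ : Finset (Fin n)).filter fun t => (j : ℕ) + 1 ≤ (g t : ℕ)).card : ℤ)
          - (i : ℕ) + (j : ℕ)))
      = Matrix.of fun i j : Fin (lam 0) =>
          if aa i - bb j < 0 then 0 else y ^ (aa i - bb j).toNat := by
    ext i j
    simp only [Matrix.of_apply]
    rw [hInt_one]
    have hc1 : ((Finset.range n).filter fun t => (i : ℕ) + 1 ≤ lam t).card
        = cnt lam n ((i : ℕ)+1) := rfl
    have hc2 : ((Finset.univ : Finset (Fin n)).filter fun t => (j : ℕ) + 1 ≤ (g t : ℕ)).card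
        = cnt (GF g) n ((j : ℕ)+1) := by
      rw [cnt_eq_card_univ ((j : ℕ)+1) (fun t : Fin n => (g t : ℕ))]
      rfl
    rw [hc1, hc2]
    have harg : (cnt lam n ((i : ℕ)+1) : ℤ) - (cnt (GF g) n ((j : ℕ)+1) : ℤ) - (i : ℕ) + (j : ℕ)
        = aa i - bb j := by rw [haa, hbb]; ring
    rw [harg]
  rw [hmat, det_onevar y aa bb ?_ ?_]
  · -- translate the condition and the value
    have hval : (∑ i : Fin (lam 0), (aa i - bb i)).toNat
        = ∑ t ∈ Finset.range n, (lam t - GF g t) :=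
      sum_ab (lam 0) n lam (GF g) (fun t _ => hA (Nat.zero_le t)) hGle
    rw [hval]
    refine if_congr ?_ rfl rfl
    constructor
    · rintro ⟨h1, h2⟩ t
      have hstrictN : ∀ p : ℕ, p + 1 < lam 0 → cnt lam n (p+2) ≤ cnt (GF g) n (p+1) := by
        intro p hp
        have hpl : p < lam 0 := Nat.lt_of_succ_lt hp
        have h3 := h2 ⟨p, hpl⟩ ⟨p+1, hp⟩ rfl
        have e1 : aa ⟨p+1, hp⟩ = (cnt lam n (p+2) : ℤ) - (p+1 : ℕ) := rfl
        have e2 : bb ⟨p, hpl⟩ = (cnt (GF g) n (p+1) : ℤ) - (p : ℕ) := rfl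
        rw [e1, e2] at h3
        omega
      have h4 := (strip_iff n lam (GF g) hA hGanti hGle hlen).mp hstrictN (t : ℕ)
      have h5 := GF_lt g t
      omega
    · intro hst
      have hstN : ∀ t : ℕ, lam t ≤ GF g t + 1 := by
        intro t
        by_cases h : t < n
        · have h6 := hst ⟨t, h⟩
          have h7 : GF g t = (g ⟨t, h⟩ : ℕ) := dif_pos h
          simp only [Fin.val_mk] at h6
          omega
        · have := hlen t (le_of_not_gt h)
          omega
      constructor
      · intro i
        have h8 : cnt (GF g) n ((i : ℕ)+1) ≤ cnt lam n ((i : ℕ)+1) := cnt_mono_f n _ hGle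
        simp only [haa, hbb]
        omega
      · intro i j hij
        have h9 : cnt lam n ((i : ℕ)+2) ≤ cnt (GF g) n ((i : ℕ)+1) :=
          (strip_iff n lam (GF g) hA hGanti hGle hlen).mpr hstN (i : ℕ) (by
            have := j.isLt; omega)
        have h9' : cnt lam n ((i : ℕ)+1+1) ≤ cnt (GF g) n ((i : ℕ)+1) := h9
        simp only [haa, hbb]
        rw [hij]
        omega
  · -- StrictAnti aa
    intro i j hij
    have hlt : (i : ℕ) < (j : ℕ) := hij
    have := cnt_anti lam n (show (i : ℕ)+1 ≤ (j : ℕ)+1 by omega)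
    simp only [haa]
    omega
  · -- StrictAnti bb
    intro i j hij
    have hlt : (i : ℕ) < (j : ℕ) := hij
    have := cnt_anti (GF g) n (show (i : ℕ)+1 ≤ (j : ℕ)+1 by omega)
    simp only [hbb]
    omega

/-- Determinantal formula for the orthosymplectic Schur function with one odd variable:
`spo_λ(X; y) = (1/D) det(x_i^{λ_j+n−j+1} − x̄_i^{λ_j+n−j+1} + y(x_i^{λ_j+n−j} − x̄_i^{λ_j+n−j}))`,
where `D = ∏_i (x_i − x̄_i) ∏_{i<j} (x_i + x̄_i − x_j − x̄_j)`. -/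
theorem spo_one_odd_det {K : Type*} [Field K] (n : ℕ) (x : Fin n → K) (hx : ∀ i, x i ≠ 0)
    (lam : ℕ → ℕ) (hA : Antitone lam) (hlen : ∀ i, n ≤ i → lam i = 0) (y : K) :
    spoSchur n n x lam ![y]
      = (Matrix.of fun i j : Fin n =>
          x i ^ (lam j + (n - (j : ℕ))) - (x i)⁻¹ ^ (lam j + (n - (j : ℕ)))
            + y * (x i ^ (lam j + (n - 1 - (j : ℕ))) - (x i)⁻¹ ^ (lam j + (n - 1 - (j : ℕ))))).det /
        ((∏ i, (x i - (x i)⁻¹)) *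
          ∏ i, ∏ j ∈ Finset.Ioi i, (x i + (x i)⁻¹ - x j - (x j)⁻¹)) := by
  classical
  have hrhs : (Matrix.of fun i j : Fin n =>
          x i ^ (lam j + (n - (j : ℕ))) - (x i)⁻¹ ^ (lam j + (n - (j : ℕ)))
            + y * (x i ^ (lam j + (n - 1 - (j : ℕ))) - (x i)⁻¹ ^ (lam j + (n - 1 - (j : ℕ))))).det /
        ((∏ i, (x i - (x i)⁻¹)) *
          ∏ i, ∏ j ∈ Finset.Ioi i, (x i + (x i)⁻¹ - x j - (x j)⁻¹))
      = ∑ S : Finset (Fin n), (if Ok lam S then XX x lam y (gfn lam S) else 0) := by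
    rw [det_expand y
      (fun i j => x i ^ (lam j + (n - (j : ℕ))) - (x i)⁻¹ ^ (lam j + (n - (j : ℕ))))
      (fun i j => x i ^ (lam j + (n - 1 - (j : ℕ))) - (x i)⁻¹ ^ (lam j + (n - 1 - (j : ℕ))))]
    rw [Finset.sum_div]
    refine Finset.sum_congr rfl fun S _ => ?_
    by_cases hok : Ok lam S
    · rw [if_pos hok, XX, ← card_Sfn S hok.1, detR_eq x lam S hok.1, DD]
    · rw [if_neg hok, detR_zero x lam hA S hok, mul_zero, zero_div]
  rw [hrhs, spoSchur]
  have hlhs : ∀ g : (i : Fin n) → Fin (lam (i : ℕ) + 1),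
      (if ∀ i j : Fin n, i ≤ j → ((g j : ℕ) ≤ (g i : ℕ)) then
        spSchur x (fun i => (g i : ℕ)) *
          (Matrix.of fun i j : Fin (lam 0) =>
            hInt ![y]
              (((((Finset.range n).filter fun t => (i : ℕ) + 1 ≤ lam t).card : ℤ))
                - (((Finset.univ : Finset (Fin n)).filter fun t =>
                      (j : ℕ) + 1 ≤ (g t : ℕ)).card : ℤ)
                - (i : ℕ) + (j : ℕ))).det
      else 0) = if Valid g then XX x lam y g else 0 := by
    intro g
    by_cases hant : ∀ i j : Fin n, i ≤ j → ((g j : ℕ) ≤ (g i : ℕ))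
    · rw [if_pos hant, JT_eval n lam hA hlen y g hant]
      by_cases hst : ∀ t : Fin n, lam (t : ℕ) ≤ (g t : ℕ) + 1
      · have hv : Valid g := ⟨hant, hst⟩
        rw [if_pos hst, if_pos hv, XX, NumMat]
        simp only [spSchur]
        rw [weyl_denom x hx, DD]
        ring
      · rw [if_neg hst, if_neg (fun hv : Valid g => hst hv.2), mul_zero]
    · rw [if_neg hant, if_neg (fun hv : Valid g => hant hv.1)]
  rw [Finset.sum_congr rfl (fun g _ => hlhs g)]
  rw [← Finset.sum_filter, ← Finset.sum_filter]
  refine Finset.sum_bij' (fun g _ => Sfn g) (fun S _ => gfn lam S) ?_ ?_ ?_ ?_ ?_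
  · intro g hg
    have hgv : Valid g := (Finset.mem_filter.mp hg).2
    exact Finset.mem_filter.mpr ⟨Finset.mem_univ _, Ok_Sfn g hgv⟩
  · intro S hS
    have hok : Ok lam S := (Finset.mem_filter.mp hS).2
    exact Finset.mem_filter.mpr ⟨Finset.mem_univ _, Valid_gfn S hok⟩
  · intro g hg
    exact gfn_Sfn g (Finset.mem_filter.mp hg).2
  · intro S hS
    exact Sfn_gfn S (Finset.mem_filter.mp hS).2
  · intro g hg
    rw [gfn_Sfn g (Finset.mem_filter.mp hg).2]
end

section
/- Let q(x,y,z,a,b) = (1+xz)(1+yz)/(1−xy) − a·(x+z)(1+yz)/(x−y) + b·(1+xz)(y+z)/(x−y) − ab·(x+z)(y+z)/(1−xy). Then for variables x₁,…,x_n, y₁,…,y_n, a₁,…,a_n, b₁,…,b_n, z: det( q(x_i, y_j, z, a_i, b_j) )_{1≤i,j≤n} = (−1)^n / ( ∏_{i,j} (x_i − y_j)(1 − x_i y_j) ) · det W, where W is the (2n+1)×(2n+1) matrix with W_{i,j} = x_i^{j−1} − a_i x_i^{2n+1−j} for 1 ≤ i ≤ n, W_{i,j} = y_{i−n}^{j−1}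 − b_{i−n} y_{i−n}^{2n+1−j} for n+1 ≤ i ≤ 2n, and W_{2n+1,j} = (−z)^{2n+1−j}. -/
open Polynomial Matrix Finset

namespace DetQAux

variable {F : Type*} [Field F]

/-- product over ordered pairs -/
def pairProd {m : ℕ} (v : Fin m → F) : F := ∏ i, ∏ j ∈ Finset.Ioi i, (v j - v i)

lemma prod_Ioi_eq_prod_ite {m : ℕ} (i : Fin m) (f : Fin m → F) :
    ∏ j ∈ Finset.Ioi i, f j = ∏ j, if i < j then f j else 1 := by
  rw [← Finset.prod_filter]
  congr 1
  ext j
  simp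

lemma pairProd_split {p q : ℕ} (u : Fin p → F) (v : Fin q → F) :
    pairProd (Fin.append u v) =
      pairProd u * pairProd v * ∏ i, ∏ j, (v j - u i) := by
  unfold pairProd
  simp only [prod_Ioi_eq_prod_ite]
  rw [Fin.prod_univ_add]
  have h1 : ∀ i : Fin p,
      (∏ j : Fin (p+q), if Fin.castAdd q i < j then Fin.append u v j - Fin.append u v (Fin.castAdd q i) else 1)
      = (∏ j, if i < j then u j - u i else 1) * ∏ j : Fin q, (v j - u i) := by
    intro i
    rw [Fin.prod_univ_add]
    congr 1
    · apply Finset.prod_congr rfl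
      intro j _
      have : Fin.castAdd q i < Fin.castAdd q j ↔ i < j := by
        simp only [Fin.lt_def, Fin.coe_castAdd]
      rw [Fin.append_left, Fin.append_left]
      by_cases h : i < j
      · rw [if_pos (this.mpr h), if_pos h]
      · rw [if_neg (fun c => h (this.mp c)), if_neg h]
    · apply Finset.prod_congr rfl
      intro j _
      rw [Fin.append_right, Fin.append_left, if_pos]
      simp only [Fin.lt_def, Fin.coe_castAdd, Fin.coe_natAdd]
      omega
  have h2 : ∀ i : Fin q,
      (∏ j : Fin (p+q), if Fin.natAdd p i < j then Fin.append u v j - Fin.append u v (Fin.natAdd p i) else 1)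
      = (∏ j, if i < j then v j - v i else 1) := by
    intro i
    rw [Fin.prod_univ_add]
    have : (∏ j : Fin p, if Fin.natAdd p i < Fin.castAdd q j then Fin.append u v (Fin.castAdd q j) - Fin.append u v (Fin.natAdd p i) else 1) = 1 := by
      apply Finset.prod_eq_one
      intro j _
      rw [if_neg]
      simp only [Fin.lt_def, Fin.coe_castAdd, Fin.coe_natAdd]
      omega
    rw [this, one_mul]
    apply Finset.prod_congr rfl
    intro j _
    have : Fin.natAdd p i < Fin.natAdd p j ↔ i < j := by
      simp only [Fin.lt_def, Fin.coe_natAdd, Nat.add_lt_add_iff_left]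
    rw [Fin.append_right, Fin.append_right]
    by_cases h : i < j
    · rw [if_pos (this.mpr h), if_pos h]
    · rw [if_neg (fun c => h (this.mp c)), if_neg h]
  rw [Finset.prod_congr rfl (fun i _ => h1 i), Finset.prod_congr rfl (fun i _ => h2 i),
    Finset.prod_mul_distrib]
  ring

lemma pairProd_split' {m p q : ℕ} (hm : m = p + q) (w : Fin m → F) (u : Fin p → F) (v : Fin q → F)
    (hu : ∀ i : Fin p, w (finCongr hm.symm (Fin.castAdd q i)) = u i)
    (hv : ∀ i : Fin q, w (finCongr hm.symm (Fin.natAdd p i)) = v i) :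
    pairProd w = pairProd u * pairProd v * ∏ i, ∏ j, (v j - u i) := by
  subst hm
  have hw : w = Fin.append u v := by
    funext r
    refine Fin.addCases (fun i => ?_) (fun i => ?_) r
    · rw [Fin.append_left, ← hu i]; simp
    · rw [Fin.append_right, ← hv i]; simp
  rw [hw, pairProd_split]

end DetQAux

namespace Stage2
variable {F : Type*} [Field F]

lemma prod_erase_eq_pairs {n : ℕ} (g : Fin n → Fin n → F) :
    (∏ k, ∏ l ∈ Finset.univ.erase k, g k l) = ∏ k, ∏ l ∈ Finset.Ioi k, (g k l * g l k) := by
  have key : ∀ k : Fin n, ∏ l ∈ Finset.univ.erase k, g k l =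
      (∏ l ∈ Finset.Ioi k, g k l) * ∏ l ∈ Finset.Iio k, g k l := by
    intro k
    rw [← Finset.prod_union]
    · congr 1
      ext l
      simp only [Finset.mem_union, Finset.mem_Ioi, Finset.mem_Iio, Finset.mem_erase,
        Finset.mem_univ, and_true]
      constructor
      · intro h; rcases lt_or_gt_of_ne h with h | h
        · right; exact h
        · left; exact h
      · rintro (h | h) <;> [exact (ne_of_lt h).symm; exact (ne_of_gt h).symm]
    · intro s hs1 hs2 t ht
      exfalso
      have h1 := hs1 ht; have h2 := hs2 ht
      simp only [Finset.mem_Ioi] at h1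
      simp only [Finset.mem_Iio] at h2
      exact absurd (h1.trans h2) (lt_irrefl _)
  calc (∏ k, ∏ l ∈ Finset.univ.erase k, g k l)
      = (∏ k, ∏ l ∈ Finset.Ioi k, g k l) * ∏ k, ∏ l ∈ Finset.Iio k, g k l := by
        rw [← Finset.prod_mul_distrib]; exact Finset.prod_congr rfl fun k _ => key k
    _ = (∏ k, ∏ l ∈ Finset.Ioi k, g k l) * ∏ k, ∏ l ∈ Finset.Ioi k, g l k := by
        congr 1
        apply Finset.prod_comm'
        intro k l
        simp [and_comm]
    _ = ∏ k, ∏ l ∈ Finset.Ioi k, (g k l * g l k) := by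
        rw [← Finset.prod_mul_distrib]
        exact Finset.prod_congr rfl fun k _ => (Finset.prod_mul_distrib).symm

lemma prod_pairs_mul {n : ℕ} (y : Fin n → F) :
    (∏ k, ∏ l ∈ Finset.Ioi k, (y k * y l)) = ∏ k, y k ^ (n - 1) := by
  rw [← prod_erase_eq_pairs (fun k _ => y k)]
  apply Finset.prod_congr rfl
  intro k _
  rw [Finset.prod_const, Finset.card_erase_of_mem (Finset.mem_univ k), Finset.card_univ,
    Fintype.card_fin]

lemma det_fromBlocks_diag {n : ℕ} (a b c d : Fin n → F) :
    (Matrix.fromBlocks (Matrix.diagonal a) (Matrix.diagonal b)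
      (Matrix.diagonal c) (Matrix.diagonal d)).det = ∏ k, (a k * d k - b k * c k) := by
  classical
  set M : Fin n → Matrix Bool Bool F := fun k => Matrix.of (fun s t =>
    match s, t with
    | false, false => a k
    | false, true => b k
    | true, false => c k
    | true, true => d k) with hM
  have h : Matrix.fromBlocks (Matrix.diagonal a) (Matrix.diagonal b)
      (Matrix.diagonal c) (Matrix.diagonal d) =
      ((Matrix.blockDiagonal M).submatrix
        (Equiv.boolProdEquivSum (Fin n)).symm (Equiv.boolProdEquivSum (Fin n)).symm) := by
    ext i j
    cases i <;> cases j <;>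
      simp [M, Matrix.blockDiagonal_apply, Matrix.diagonal, Equiv.boolProdEquivSum, Matrix.one_apply] <;>
      split <;> simp_all
  rw [h, Matrix.det_submatrix_equiv_self, Matrix.det_blockDiagonal]
  apply Finset.prod_congr rfl
  intro k _
  have : M k = ((M k).submatrix finTwoEquiv finTwoEquiv).submatrix finTwoEquiv.symm finTwoEquiv.symm := by
    ext i j; simp
  rw [this, Matrix.det_submatrix_equiv_self]
  have : (M k).submatrix finTwoEquiv finTwoEquiv = !![a k, b k; c k, d k] := by
    ext i j
    fin_cases i <;> fin_cases j <;> simp [M, finTwoEquiv]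
  rw [this, Matrix.det_fin_two_of]

end Stage2

namespace Stage3
variable {F : Type*} [Field F]

lemma natDegree_reflect_le {N : ℕ} {p : F[X]} (hp : p.natDegree ≤ N) :
    (p.reflect N).natDegree ≤ N := by
  apply Polynomial.natDegree_le_iff_coeff_eq_zero.mpr
  intro m hm
  rw [Polynomial.coeff_reflect, Polynomial.revAt_eq_self_of_lt hm]
  exact Polynomial.coeff_eq_zero_of_natDegree_lt (lt_of_le_of_lt hp hm)

lemma sum_pair (N : ℕ) (p : F[X]) (hp : p.natDegree ≤ N) (t : F) :
    ∑ j : Fin (N+1), t ^ (j:ℕ) * p.coeff j = p.eval t := by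
  rw [Polynomial.eval_eq_sum_range' (Nat.lt_succ_of_le hp) t, ← Fin.sum_univ_eq_sum_range]
  exact Finset.sum_congr rfl fun j _ => mul_comm _ _

lemma sum_pair_rev (N : ℕ) (p : F[X]) (hp : p.natDegree ≤ N) (t : F) :
    ∑ j : Fin (N+1), t ^ (N - (j:ℕ)) * p.coeff j = (p.reflect N).eval t := by
  have h1 : ∑ j : Fin (N+1), t ^ (N - (j:ℕ)) * p.coeff j
      = ∑ j ∈ Finset.range (N+1), t ^ (N - j) * p.coeff j :=
    Fin.sum_univ_eq_sum_range (fun j => t ^ (N - j) * p.coeff j) (N+1)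
  rw [h1]
  have h2 : ∀ j ∈ Finset.range (N+1),
      t ^ (N - j) * p.coeff j = (fun m => t ^ m * (p.reflect N).coeff m) ((N+1) - 1 - j) := by
    intro j hj
    simp only [Finset.mem_range] at hj
    have hjN : j ≤ N := by omega
    simp only [Nat.succ_sub_one]
    rw [Polynomial.coeff_reflect, Polynomial.revAt_le (by omega), Nat.sub_sub_self hjN]
  rw [Finset.sum_congr rfl h2, Finset.sum_range_reflect (fun m => t ^ m * (p.reflect N).coeff m) (N+1),
    ← Fin.sum_univ_eq_sum_range]
  exact sum_pair N _ (natDegree_reflect_le hp) t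

lemma sum_pair_full (N : ℕ) (p : F[X]) (hp : p.natDegree ≤ N) (t u : F) :
    ∑ j : Fin (N+1), (t ^ (j:ℕ) - u * t ^ (N - (j:ℕ))) * p.coeff j
      = p.eval t - u * (p.reflect N).eval t := by
  rw [← sum_pair N p hp t, ← sum_pair_rev N p hp t, Finset.mul_sum, ← Finset.sum_sub_distrib]
  exact Finset.sum_congr rfl fun j _ => by ring

lemma reflect_sub (N : ℕ) (f g : F[X]) : (f - g).reflect N = f.reflect N - g.reflect N := by
  have h : ∀ h : F[X], (-h).reflect N = -(h.reflect N) := by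
    intro h
    have := Polynomial.reflect_C_mul h (-1) N
    simpa [neg_one_mul] using this
  rw [sub_eq_add_neg, Polynomial.reflect_add, h, sub_eq_add_neg]

lemma reflect_linear_1 (c : F) : ((X : F[X]) - C c).reflect 1 = 1 - C c * X := by
  rw [reflect_sub, Polynomial.reflect_C]
  simp

lemma reflect_linear_2 (c : F) : ((1 : F[X]) - C c * X).reflect 1 = X - C c := by
  rw [reflect_sub, Polynomial.reflect_C_mul]
  simp

lemma natDegree_linear_1 (c : F) : ((X : F[X]) - C c).natDegree ≤ 1 :=
  Polynomial.natDegree_X_sub_C_le c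

lemma natDegree_linear_2 (c : F) : ((1 : F[X]) - C c * X).natDegree ≤ 1 := by
  apply le_trans (Polynomial.natDegree_sub_le _ _)
  simp [Polynomial.natDegree_C_mul_le]
  exact le_trans (Polynomial.natDegree_mul_le) (by simp)

end Stage3

namespace Stage4
open Stage3
variable {F : Type*} [Field F]

/-- the quadratic factor `(X - c)(1 - cX)` -/
noncomputable def fac (c : F) : F[X] := ((X : F[X]) - C c) * (1 - C c * X)

lemma natDegree_fac_le (c : F) : (fac c).natDegree ≤ 2 :=
  le_trans Polynomial.natDegree_mul_le
    (by have := natDegree_linear_1 c; have := natDegree_linear_2 c; omega)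

lemma reflect_fac (c : F) : (fac c).reflect 2 = fac c := by
  have : (2 : ℕ) = 1 + 1 := rfl
  rw [fac, this, Polynomial.reflect_mul _ _ (natDegree_linear_1 c) (natDegree_linear_2 c),
    reflect_linear_1, reflect_linear_2, mul_comm]

lemma eval_fac (c t : F) : (fac c).eval t = (t - c) * (1 - c * t) := by
  simp [fac]

/-- product of quadratic factors -/
noncomputable def piP {n : ℕ} (y : Fin n → F) (s : Finset (Fin n)) : F[X] :=
  ∏ l ∈ s, fac (y l)

lemma natDegree_piP_le {n : ℕ} (y : Fin n → F) (s : Finset (Fin n)) :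
    (piP y s).natDegree ≤ 2 * s.card := by
  refine le_trans (Polynomial.natDegree_prod_le s _) ?_
  calc ∑ l ∈ s, (fac (y l)).natDegree ≤ ∑ _l ∈ s, 2 :=
        Finset.sum_le_sum fun l _ => natDegree_fac_le (y l)
    _ = 2 * s.card := by rw [Finset.sum_const, smul_eq_mul, mul_comm]

lemma reflect_piP {n : ℕ} (y : Fin n → F) (s : Finset (Fin n)) :
    (piP y s).reflect (2 * s.card) = piP y s := by
  classical
  induction s using Finset.induction_on with
  | empty => simp [piP, Polynomial.reflect_one]
  | @insert a s ha ih =>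
      rw [piP, Finset.prod_insert ha, ← piP, Finset.card_insert_of_notMem ha]
      have h2 : 2 * (s.card + 1) = 2 + 2 * s.card := by ring
      rw [h2, Polynomial.reflect_mul _ _ (natDegree_fac_le _) (natDegree_piP_le y s),
        reflect_fac, ih]

lemma eval_piP {n : ℕ} (y : Fin n → F) (s : Finset (Fin n)) (t : F) :
    (piP y s).eval t = ∏ l ∈ s, ((t - y l) * (1 - y l * t)) := by
  rw [piP, Polynomial.eval_prod]
  exact Finset.prod_congr rfl fun l _ => eval_fac (y l) t

/-- S-polynomial -/
noncomputable def SP (yk bk z : F) : F[X] :=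
  (1 + C z * X) * (C (1 + yk * z) * ((X : F[X]) - C yk) + C (bk * (yk + z)) * (1 - C yk * X))

/-- reflected S-polynomial -/
noncomputable def SPr (yk bk z : F) : F[X] :=
  ((X : F[X]) + C z) * (C (1 + yk * z) * (1 - C yk * X) + C (bk * (yk + z)) * ((X : F[X]) - C yk))

lemma natDegree_SP_aux (yk bk z : F) :
    (C (1 + yk * z) * ((X : F[X]) - C yk) + C (bk * (yk + z)) * (1 - C yk * X)).natDegree ≤ 1 := by
  apply le_trans (Polynomial.natDegree_add_le _ _)
  apply max_le
  · refine le_trans (Polynomial.natDegree_mul_le) ?_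
    have h1 := natDegree_linear_1 yk
    have h2 : (C (1 + yk * z) : F[X]).natDegree = 0 := Polynomial.natDegree_C _
    omega
  · refine le_trans (Polynomial.natDegree_mul_le) ?_
    have h1 := natDegree_linear_2 yk
    have h2 : (C (bk * (yk + z)) : F[X]).natDegree = 0 := Polynomial.natDegree_C _
    omega

lemma natDegree_one_add_le (z : F) : ((1 : F[X]) + C z * X).natDegree ≤ 1 := by
  apply le_trans (Polynomial.natDegree_add_le _ _)
  apply max_le (by simp)
  exact le_trans (Polynomial.natDegree_mul_le) (by simp)

lemma natDegree_SP_le (yk bk z : F) : (SP yk bk z).natDegree ≤ 2 :=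
  le_trans Polynomial.natDegree_mul_le
    (by have := natDegree_one_add_le z; have := natDegree_SP_aux yk bk z; omega)

lemma reflect_SP (yk bk z : F) : (SP yk bk z).reflect 2 = SPr yk bk z := by
  have h2 : (2 : ℕ) = 1 + 1 := rfl
  rw [SP, h2, Polynomial.reflect_mul _ _ (natDegree_one_add_le z) (natDegree_SP_aux yk bk z)]
  have e1 : ((1 : F[X]) + C z * X).reflect 1 = (X : F[X]) + C z := by
    rw [Polynomial.reflect_add, Polynomial.reflect_C_mul]
    simp [add_comm]
  have e2 : (C (1 + yk * z) * ((X : F[X]) - C yk) + C (bk * (yk + z)) * (1 - C yk * X)).reflect 1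
      = C (1 + yk * z) * (1 - C yk * X) + C (bk * (yk + z)) * ((X : F[X]) - C yk) := by
    rw [Polynomial.reflect_add, Polynomial.reflect_C_mul, Polynomial.reflect_C_mul,
      reflect_linear_1, reflect_linear_2]
  rw [e1, e2, SPr]

/-- evaluation of SP -/
lemma eval_SP (yk bk z t : F) :
    (SP yk bk z).eval t = (1 + z * t) * ((1 + yk * z) * (t - yk) + bk * (yk + z) * (1 - yk * t)) := by
  simp [SP]

lemma eval_SPr (yk bk z t : F) :
    (SPr yk bk z).eval t = (t + z) * ((1 + yk * z) * (1 - yk * t) + bk * (yk + z) * (t - yk)) := by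
  simp [SPr]

end Stage4

namespace Stage5
open Stage3 Stage4
variable {F : Type*} [Field F]

section CR
variable {R : Type*} [CommRing R] (n : ℕ) (x y a b : Fin n → R) (z : R)

/-- the big matrix W -/
def Wmat : Matrix (Fin (2*n+1)) (Fin (2*n+1)) R :=
  Matrix.of fun i j : Fin (2 * n + 1) =>
    if h : (i : ℕ) < n then
      x ⟨i, h⟩ ^ (j : ℕ) - a ⟨i, h⟩ * x ⟨i, h⟩ ^ (2 * n - (j : ℕ))
    else if h2 : (i : ℕ) < 2 * n then
      y ⟨(i : ℕ) - n, Nat.sub_lt_left_of_lt_add (by omega) (by omega)⟩ ^ (j : ℕ)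
        - b ⟨(i : ℕ) - n, Nat.sub_lt_left_of_lt_add (by omega) (by omega)⟩ * y ⟨(i : ℕ) - n, Nat.sub_lt_left_of_lt_add (by omega) (by omega)⟩ ^ (2 * n - (j : ℕ))
    else (-z) ^ (2 * n - (j : ℕ))

end CR

section Defs
variable (n : ℕ) (x y a b : Fin n → F) (z : F)

noncomputable def Qpol (k : Fin n) : F[X] := piP y (Finset.univ.erase k) * SP (y k) (b k) z
noncomputable def Ppol (k : Fin n) : F[X] := piP y (Finset.univ.erase k)
noncomputable def Rpol : F[X] := piP y Finset.univ

lemma card_erase (k : Fin n) : (Finset.univ.erase k).card = n - 1 := by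
  rw [Finset.card_erase_of_mem (Finset.mem_univ k), Finset.card_univ, Fintype.card_fin]

lemma natDegree_Qpol_le (k : Fin n) : (Qpol n y b z k).natDegree ≤ 2 * n := by
  refine le_trans Polynomial.natDegree_mul_le ?_
  have h1 := natDegree_piP_le y (Finset.univ.erase k)
  have h2 := natDegree_SP_le (y k) (b k) z
  have h3 := card_erase n k
  have := k.pos
  omega

lemma natDegree_Ppol_le (k : Fin n) : (Ppol n y k).natDegree ≤ 2 * n := by
  have h1 := natDegree_piP_le y (Finset.univ.erase k)
  have h3 := card_erase n k
  have := k.pos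
  unfold Ppol
  omega

lemma natDegree_Rpol_le : (Rpol n y).natDegree ≤ 2 * n := by
  have h1 := natDegree_piP_le y (Finset.univ : Finset (Fin n))
  rw [Finset.card_univ, Fintype.card_fin] at h1
  unfold Rpol
  omega

lemma reflect_Qpol (k : Fin n) :
    (Qpol n y b z k).reflect (2 * n) = piP y (Finset.univ.erase k) * SPr (y k) (b k) z := by
  have h2 : 2 * n = 2 * (Finset.univ.erase k).card + 2 := by
    rw [card_erase n k]; have := k.pos; omega
  rw [Qpol, h2, Polynomial.reflect_mul _ _ (natDegree_piP_le y _) (natDegree_SP_le _ _ _),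
    reflect_piP, reflect_SP]

lemma reflect_Ppol (k : Fin n) :
    (Ppol n y k).reflect (2 * n) = piP y (Finset.univ.erase k) * X ^ 2 := by
  have h2 : 2 * n = 2 * (Finset.univ.erase k).card + 2 := by
    rw [card_erase n k]; have := k.pos; omega
  have : Ppol n y k = piP y (Finset.univ.erase k) * 1 := by rw [mul_one]; rfl
  rw [this, h2, Polynomial.reflect_mul _ _ (natDegree_piP_le y _) (by simp),
    reflect_piP, Polynomial.reflect_one]

lemma reflect_Rpol : (Rpol n y).reflect (2 * n) = Rpol n y := by
  have h2 : 2 * n = 2 * (Finset.univ : Finset (Fin n)).card := by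
    rw [Finset.card_univ, Fintype.card_fin]
  rw [Rpol, h2, reflect_piP]

/-- the auxiliary Vandermonde-type matrix W₀ -/
noncomputable def W0mat : Matrix (Fin (2*n+1)) (Fin (2*n+1)) F :=
  Matrix.of fun r m : Fin (2 * n + 1) =>
    if h : (r : ℕ) < n then y ⟨r, h⟩ ^ (m : ℕ)
    else if h2 : (r : ℕ) < 2 * n then y ⟨(r : ℕ) - n, Nat.sub_lt_left_of_lt_add (by omega) (by omega)⟩ ^ (2 * n - (m : ℕ))
    else (-z) ^ (2 * n - (m : ℕ))

noncomputable def polFin : Fin (2*n+1) → F[X] := fun c =>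
  if h : (c : ℕ) < n then Qpol n y b z ⟨c, h⟩
  else if h2 : (c : ℕ) < 2 * n then Ppol n y ⟨(c : ℕ) - n, Nat.sub_lt_left_of_lt_add (by omega) (by omega)⟩
  else Rpol n y

lemma natDegree_polFin_le (c : Fin (2*n+1)) : (polFin n y b z c).natDegree ≤ 2 * n := by
  unfold polFin
  split
  · exact natDegree_Qpol_le n y b z _
  split
  · exact natDegree_Ppol_le n y _
  · exact natDegree_Rpol_le n y

/-- the coefficient matrix V -/
noncomputable def Vsq : Matrix (Fin (2*n+1)) (Fin (2*n+1)) F :=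
  Matrix.of fun jj c => (polFin n y b z c).coeff (jj : ℕ)

def e1 : (Fin n ⊕ (Fin n ⊕ Fin 1)) ≃ Fin (2*n+1) :=
  (Equiv.sumCongr (Equiv.refl (Fin n)) finSumFinEquiv).trans
    (finSumFinEquiv.trans (finCongr (by omega)))

def e2 : ((Fin n ⊕ Fin n) ⊕ Fin 1) ≃ Fin (2*n+1) :=
  (Equiv.sumCongr finSumFinEquiv (Equiv.refl (Fin 1))).trans
    (finSumFinEquiv.trans (finCongr (by omega)))

lemma e1_inl (k : Fin n) : ((e1 n (Sum.inl k) : Fin (2*n+1)) : ℕ) = (k : ℕ) := by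
  simp [e1]
lemma e1_inrl (k : Fin n) : ((e1 n (Sum.inr (Sum.inl k)) : Fin (2*n+1)) : ℕ) = n + (k : ℕ) := by
  simp [e1]
lemma e1_inrr (r : Fin 1) : ((e1 n (Sum.inr (Sum.inr r)) : Fin (2*n+1)) : ℕ) = 2 * n := by
  have h0 : (r : ℕ) = 0 := by omega
  simp [e1, h0]; omega
lemma e2_inll (k : Fin n) : ((e2 n (Sum.inl (Sum.inl k)) : Fin (2*n+1)) : ℕ) = (k : ℕ) := by
  simp [e2]
lemma e2_inlr (k : Fin n) : ((e2 n (Sum.inl (Sum.inr k)) : Fin (2*n+1)) : ℕ) = n + (k : ℕ) := by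
  simp [e2]; omega
lemma e2_inr (r : Fin 1) : ((e2 n (Sum.inr r) : Fin (2*n+1)) : ℕ) = 2 * n := by
  have h0 : (r : ℕ) = 0 := by omega
  simp [e2, h0]

end Defs
end Stage5

namespace Stage6
open Stage3 Stage4 Stage5 DetQAux Stage2
variable {F : Type*} [Field F]

section CR
variable {R : Type*} [CommRing R] (n : ℕ) (x y a b : Fin n → R) (z : R)

def EvS (t yk bk z : R) : R := (1 + z * t) * ((1 + yk * z) * (t - yk) + bk * (yk + z) * (1 - yk * t))
def EvSr (t yk bk z : R) : R := (t + z) * ((1 + yk * z) * (1 - yk * t) + bk * (yk + z) * (t - yk))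

def Amat : Matrix (Fin n) (Fin n) R :=
  Matrix.of fun i k =>
    (∏ l ∈ Finset.univ.erase k, ((x i - y l) * (1 - y l * x i))) *
      (EvS (x i) (y k) (b k) z - a i * EvSr (x i) (y k) (b k) z)

end CR

section Entries
variable (n : ℕ) (x y a b : Fin n → F) (z : F)

noncomputable def pihat (k : Fin n) : F :=
  ∏ l ∈ Finset.univ.erase k, ((y k - y l) * (1 - y l * y k))

noncomputable def EvalR : F := ∏ l, ((-z - y l) * (1 - y l * (-z)))

noncomputable def Dv (k : Fin n) : F := pihat n y k * (1 - b k * (y k)^2)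
noncomputable def Gv (k : Fin n) : F := pihat n y k * EvS (y k) (y k) (b k) z
noncomputable def Hv (k : Fin n) : F := pihat n y k
noncomputable def Gv' (k : Fin n) : F := pihat n y k * EvSr (y k) (y k) (b k) z
noncomputable def Hv' (k : Fin n) : F := (y k)^2 * pihat n y k

-- row computation lemmas
lemma mulVsq_x (i : Fin n) (c : Fin (2*n+1)) :
    (Wmat n x y a b z * Vsq n y b z) (e1 n (Sum.inl i)) c
      = (polFin n y b z c).eval (x i)
        - a i * ((polFin n y b z c).reflect (2*n)).eval (x i) := by
  rw [Matrix.mul_apply]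
  have h : ((e1 n (Sum.inl i) : Fin (2*n+1)) : ℕ) < n := by rw [e1_inl]; exact i.isLt
  have hmk : (⟨((e1 n (Sum.inl i) : Fin (2*n+1)) : ℕ), h⟩ : Fin n) = i := Fin.ext (e1_inl n i)
  have hstep : ∀ j : Fin (2*n+1), Wmat n x y a b z (e1 n (Sum.inl i)) j * Vsq n y b z j c
      = (x i ^ (j:ℕ) - a i * x i ^ (2*n - (j:ℕ))) * (polFin n y b z c).coeff (j:ℕ) := by
    intro j
    simp only [Wmat, Matrix.of_apply, Vsq]
    rw [dif_pos h, hmk]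
  rw [Finset.sum_congr rfl fun j _ => hstep j]
  exact sum_pair_full (2*n) _ (natDegree_polFin_le n y b z c) (x i) (a i)

lemma mulVsq_y (j : Fin n) (c : Fin (2*n+1)) :
    (Wmat n x y a b z * Vsq n y b z) (e1 n (Sum.inr (Sum.inl j))) c
      = (polFin n y b z c).eval (y j)
        - b j * ((polFin n y b z c).reflect (2*n)).eval (y j) := by
  rw [Matrix.mul_apply]
  have hco := e1_inrl n j
  have h1 : ¬ ((e1 n (Sum.inr (Sum.inl j)) : Fin (2*n+1)) : ℕ) < n := by omega
  have h2 : ((e1 n (Sum.inr (Sum.inl j)) : Fin (2*n+1)) : ℕ) < 2 * n := by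
    have := j.isLt; omega
  have hmk : (⟨((e1 n (Sum.inr (Sum.inl j)) : Fin (2*n+1)) : ℕ) - n, by omega⟩ : Fin n) = j := by
    apply Fin.ext; simp [hco]
  have hstep : ∀ m : Fin (2*n+1), Wmat n x y a b z (e1 n (Sum.inr (Sum.inl j))) m * Vsq n y b z m c
      = (y j ^ (m:ℕ) - b j * y j ^ (2*n - (m:ℕ))) * (polFin n y b z c).coeff (m:ℕ) := by
    intro m
    simp only [Wmat, Matrix.of_apply, Vsq]
    rw [dif_neg h1, dif_pos h2, hmk]
  rw [Finset.sum_congr rfl fun m _ => hstep m]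
  exact sum_pair_full (2*n) _ (natDegree_polFin_le n y b z c) (y j) (b j)

lemma mulVsq_z (r : Fin 1) (c : Fin (2*n+1)) :
    (Wmat n x y a b z * Vsq n y b z) (e1 n (Sum.inr (Sum.inr r))) c
      = ((polFin n y b z c).reflect (2*n)).eval (-z) := by
  rw [Matrix.mul_apply]
  have hco := e1_inrr n r
  have h1 : ¬ ((e1 n (Sum.inr (Sum.inr r)) : Fin (2*n+1)) : ℕ) < n := by
    by_cases hn : n = 0
    · subst hn; omega
    · omega
  have h2 : ¬ ((e1 n (Sum.inr (Sum.inr r)) : Fin (2*n+1)) : ℕ) < 2 * n := by omega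
  have hstep : ∀ m : Fin (2*n+1), Wmat n x y a b z (e1 n (Sum.inr (Sum.inr r))) m * Vsq n y b z m c
      = (-z) ^ (2*n - (m:ℕ)) * (polFin n y b z c).coeff (m:ℕ) := by
    intro m
    simp only [Wmat, Matrix.of_apply, Vsq]
    rw [dif_neg h1, dif_neg h2]
  rw [Finset.sum_congr rfl fun m _ => hstep m]
  exact sum_pair_rev (2*n) _ (natDegree_polFin_le n y b z c) (-z)

lemma mulW0Vsq_ev (j : Fin n) (c : Fin (2*n+1)) :
    (W0mat n y z * Vsq n y b z) (e2 n (Sum.inl (Sum.inl j))) c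
      = (polFin n y b z c).eval (y j) := by
  rw [Matrix.mul_apply]
  have hco := e2_inll n j
  have h : ((e2 n (Sum.inl (Sum.inl j)) : Fin (2*n+1)) : ℕ) < n := by rw [hco]; exact j.isLt
  have hmk : (⟨((e2 n (Sum.inl (Sum.inl j)) : Fin (2*n+1)) : ℕ), h⟩ : Fin n) = j := Fin.ext hco
  have hstep : ∀ m : Fin (2*n+1), W0mat n y z (e2 n (Sum.inl (Sum.inl j))) m * Vsq n y b z m c
      = y j ^ (m:ℕ) * (polFin n y b z c).coeff (m:ℕ) := by
    intro m
    simp only [W0mat, Matrix.of_apply, Vsq]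
    rw [dif_pos h, hmk]
  rw [Finset.sum_congr rfl fun m _ => hstep m]
  exact sum_pair (2*n) _ (natDegree_polFin_le n y b z c) (y j)

lemma mulW0Vsq_rev (j : Fin n) (c : Fin (2*n+1)) :
    (W0mat n y z * Vsq n y b z) (e2 n (Sum.inl (Sum.inr j))) c
      = ((polFin n y b z c).reflect (2*n)).eval (y j) := by
  rw [Matrix.mul_apply]
  have hco := e2_inlr n j
  have h1 : ¬ ((e2 n (Sum.inl (Sum.inr j)) : Fin (2*n+1)) : ℕ) < n := by omega
  have h2 : ((e2 n (Sum.inl (Sum.inr j)) : Fin (2*n+1)) : ℕ) < 2 * n := by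
    have := j.isLt; omega
  have hmk : (⟨((e2 n (Sum.inl (Sum.inr j)) : Fin (2*n+1)) : ℕ) - n, by omega⟩ : Fin n) = j := by
    apply Fin.ext; simp [hco]
  have hstep : ∀ m : Fin (2*n+1), W0mat n y z (e2 n (Sum.inl (Sum.inr j))) m * Vsq n y b z m c
      = y j ^ (2*n - (m:ℕ)) * (polFin n y b z c).coeff (m:ℕ) := by
    intro m
    simp only [W0mat, Matrix.of_apply, Vsq]
    rw [dif_neg h1, dif_pos h2, hmk]
  rw [Finset.sum_congr rfl fun m _ => hstep m]
  exact sum_pair_rev (2*n) _ (natDegree_polFin_le n y b z c) (y j)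

lemma mulW0Vsq_z (r : Fin 1) (c : Fin (2*n+1)) :
    (W0mat n y z * Vsq n y b z) (e2 n (Sum.inr r)) c
      = ((polFin n y b z c).reflect (2*n)).eval (-z) := by
  rw [Matrix.mul_apply]
  have hco := e2_inr n r
  have h1 : ¬ ((e2 n (Sum.inr r) : Fin (2*n+1)) : ℕ) < n := by
    by_cases hn : n = 0
    · subst hn; omega
    · omega
  have h2 : ¬ ((e2 n (Sum.inr r) : Fin (2*n+1)) : ℕ) < 2 * n := by omega
  have hstep : ∀ m : Fin (2*n+1), W0mat n y z (e2 n (Sum.inr r)) m * Vsq n y b z m c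
      = (-z) ^ (2*n - (m:ℕ)) * (polFin n y b z c).coeff (m:ℕ) := by
    intro m
    simp only [W0mat, Matrix.of_apply, Vsq]
    rw [dif_neg h1, dif_neg h2]
  rw [Finset.sum_congr rfl fun m _ => hstep m]
  exact sum_pair_rev (2*n) _ (natDegree_polFin_le n y b z c) (-z)

-- identification of polFin at the three kinds of columns
lemma polFin_Q (k : Fin n) : polFin n y b z (e1 n (Sum.inl k)) = Qpol n y b z k := by
  have h : ((e1 n (Sum.inl k) : Fin (2*n+1)) : ℕ) < n := by rw [e1_inl]; exact k.isLt
  have hmk : (⟨((e1 n (Sum.inl k) : Fin (2*n+1)) : ℕ), h⟩ : Fin n) = k := Fin.ext (e1_inl n k)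
  rw [polFin, dif_pos h, hmk]

lemma polFin_P (k : Fin n) : polFin n y b z (e1 n (Sum.inr (Sum.inl k))) = Ppol n y k := by
  have hco := e1_inrl n k
  have h1 : ¬ ((e1 n (Sum.inr (Sum.inl k)) : Fin (2*n+1)) : ℕ) < n := by omega
  have h2 : ((e1 n (Sum.inr (Sum.inl k)) : Fin (2*n+1)) : ℕ) < 2 * n := by
    have := k.isLt; omega
  have hmk : (⟨((e1 n (Sum.inr (Sum.inl k)) : Fin (2*n+1)) : ℕ) - n, by omega⟩ : Fin n) = k := by
    apply Fin.ext; simp [hco]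
  rw [polFin, dif_neg h1, dif_pos h2, hmk]

lemma polFin_R (r : Fin 1) : polFin n y b z (e1 n (Sum.inr (Sum.inr r))) = Rpol n y := by
  have hco := e1_inrr n r
  have h1 : ¬ ((e1 n (Sum.inr (Sum.inr r)) : Fin (2*n+1)) : ℕ) < n := by
    by_cases hn : n = 0
    · subst hn; omega
    · omega
  have h2 : ¬ ((e1 n (Sum.inr (Sum.inr r)) : Fin (2*n+1)) : ℕ) < 2 * n := by omega
  rw [polFin, dif_neg h1, dif_neg h2]

-- e2 columns in terms of e1 columns
lemma e2_col_Q (k : Fin n) : e2 n (Sum.inl (Sum.inl k)) = e1 n (Sum.inl k) :=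
  Fin.ext (by rw [e2_inll, e1_inl])
lemma e2_col_P (k : Fin n) : e2 n (Sum.inl (Sum.inr k)) = e1 n (Sum.inr (Sum.inl k)) :=
  Fin.ext (by rw [e2_inlr, e1_inrl])
lemma e2_col_R (r : Fin 1) : e2 n (Sum.inr r) = e1 n (Sum.inr (Sum.inr r)) :=
  Fin.ext (by rw [e2_inr, e1_inrr])

-- vanishing lemmas
lemma eval_piP_vanish (j k : Fin n) (hjk : j ≠ k) :
    (piP y (Finset.univ.erase k)).eval (y j) = 0 := by
  rw [eval_piP]
  apply Finset.prod_eq_zero (Finset.mem_erase.mpr ⟨hjk, Finset.mem_univ j⟩)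
  rw [sub_self, zero_mul]

lemma eval_Rpol_vanish (j : Fin n) : (Rpol n y).eval (y j) = 0 := by
  rw [Rpol, eval_piP]
  apply Finset.prod_eq_zero (Finset.mem_univ j)
  rw [sub_self, zero_mul]

end Entries
end Stage6

namespace Stage7
open Stage3 Stage4 Stage5 Stage6 DetQAux Stage2
variable {F : Type*} [Field F]
variable (n : ℕ) (x y a b : Fin n → F) (z : F)

lemma det_WV :
    (Wmat n x y a b z * Vsq n y b z).det
      = (Amat n x y a b z).det * ((∏ k, Dv n y b k) * EvalR n y z) := by
  classical
  rw [← Matrix.det_submatrix_equiv_self (e1 n) (Wmat n x y a b z * Vsq n y b z)]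
  set M := (Wmat n x y a b z * Vsq n y b z).submatrix (e1 n) (e1 n) with hM
  have h21 : M.toBlocks₂₁ = 0 := by
    ext r k
    simp only [Matrix.toBlocks₂₁, Matrix.of_apply, Matrix.submatrix_apply, hM, Matrix.zero_apply]
    cases r with
    | inl j =>
        rw [mulVsq_y, polFin_Q, reflect_Qpol, Qpol, Polynomial.eval_mul, Polynomial.eval_mul,
          eval_SP, eval_SPr]
        by_cases hjk : j = k
        · subst hjk; ring
        · rw [eval_piP_vanish n y j k hjk]; ring
    | inr r =>
        rw [mulVsq_z, polFin_Q, reflect_Qpol, Polynomial.eval_mul, eval_SPr]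
        ring
  have h11 : M.toBlocks₁₁ = Amat n x y a b z := by
    ext i k
    simp only [Matrix.toBlocks₁₁, Matrix.of_apply, Matrix.submatrix_apply, hM]
    rw [mulVsq_x, polFin_Q, reflect_Qpol, Qpol, Polynomial.eval_mul, Polynomial.eval_mul,
      eval_piP, eval_SP, eval_SPr]
    simp only [Amat, Matrix.of_apply, EvS, EvSr]
    ring
  set N := M.toBlocks₂₂ with hN
  have h11' : N.toBlocks₁₁ = Matrix.diagonal (Dv n y b) := by
    ext j k
    simp only [Matrix.toBlocks₁₁, Matrix.of_apply, Matrix.submatrix_apply, hN,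
      Matrix.toBlocks₂₂, hM]
    rw [mulVsq_y, polFin_P, reflect_Ppol, Ppol, Polynomial.eval_mul]
    by_cases hjk : j = k
    · subst hjk
      rw [Matrix.diagonal_apply_eq, eval_piP, Dv, pihat]
      simp only [Polynomial.eval_pow, Polynomial.eval_X]
      ring
    · rw [eval_piP_vanish n y j k hjk, Matrix.diagonal_apply_ne _ hjk]
      ring
  have h12' : N.toBlocks₁₂ = 0 := by
    ext j r
    simp only [Matrix.toBlocks₁₂, Matrix.of_apply, Matrix.submatrix_apply, hN,
      Matrix.toBlocks₂₂, hM, Matrix.zero_apply]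
    rw [mulVsq_y, polFin_R, reflect_Rpol, eval_Rpol_vanish]
    ring
  have h22' : N.toBlocks₂₂ = Matrix.of fun _ _ => EvalR n y z := by
    ext r s
    simp only [Matrix.toBlocks₂₂, Matrix.of_apply, Matrix.submatrix_apply, hN, hM]
    rw [mulVsq_z, polFin_R, reflect_Rpol, Rpol, eval_piP, EvalR]
  rw [← Matrix.fromBlocks_toBlocks M, h21, h11, Matrix.det_fromBlocks_zero₂₁]
  congr 1
  rw [← hN, ← Matrix.fromBlocks_toBlocks N, h11', h12', h22', Matrix.det_fromBlocks_zero₁₂,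
    Matrix.det_diagonal, Matrix.det_fin_one]
  rfl

lemma det_W0V :
    (W0mat n y z * Vsq n y b z).det
      = (∏ k, (Gv n y b z k * Hv' n y k - Hv n y k * Gv' n y b z k)) * EvalR n y z := by
  classical
  rw [← Matrix.det_submatrix_equiv_self (e2 n) (W0mat n y z * Vsq n y b z)]
  set M := (W0mat n y z * Vsq n y b z).submatrix (e2 n) (e2 n) with hM
  have h12 : M.toBlocks₁₂ = 0 := by
    ext s r
    simp only [Matrix.toBlocks₁₂, Matrix.of_apply, Matrix.submatrix_apply, hM, Matrix.zero_apply]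
    cases s with
    | inl j =>
        rw [mulW0Vsq_ev, e2_col_R, polFin_R, eval_Rpol_vanish]
    | inr j =>
        rw [mulW0Vsq_rev, e2_col_R, polFin_R, reflect_Rpol, eval_Rpol_vanish]
  have h11 : M.toBlocks₁₁ = Matrix.fromBlocks (Matrix.diagonal (Gv n y b z))
      (Matrix.diagonal (Hv n y)) (Matrix.diagonal (Gv' n y b z)) (Matrix.diagonal (Hv' n y)) := by
    ext s t
    simp only [Matrix.toBlocks₁₁, Matrix.of_apply, Matrix.submatrix_apply, hM]
    cases s with
    | inl j =>
        cases t with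
        | inl k =>
            rw [Matrix.fromBlocks_apply₁₁, mulW0Vsq_ev, e2_col_Q, polFin_Q, Qpol,
              Polynomial.eval_mul, eval_SP]
            by_cases hjk : j = k
            · subst hjk
              rw [Matrix.diagonal_apply_eq, eval_piP, Gv, pihat, EvS]
            · rw [eval_piP_vanish n y j k hjk, Matrix.diagonal_apply_ne _ hjk, zero_mul]
        | inr k =>
            rw [Matrix.fromBlocks_apply₁₂, mulW0Vsq_ev, e2_col_P, polFin_P, Ppol]
            by_cases hjk : j = k
            · subst hjk
              rw [Matrix.diagonal_apply_eq, eval_piP, Hv, pihat]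
            · rw [eval_piP_vanish n y j k hjk, Matrix.diagonal_apply_ne _ hjk]
    | inr j =>
        cases t with
        | inl k =>
            rw [Matrix.fromBlocks_apply₂₁, mulW0Vsq_rev, e2_col_Q, polFin_Q, reflect_Qpol,
              Polynomial.eval_mul, eval_SPr]
            by_cases hjk : j = k
            · subst hjk
              rw [Matrix.diagonal_apply_eq, eval_piP, Gv', pihat, EvSr]
            · rw [eval_piP_vanish n y j k hjk, Matrix.diagonal_apply_ne _ hjk, zero_mul]
        | inr k =>
            rw [Matrix.fromBlocks_apply₂₂, mulW0Vsq_rev, e2_col_P, polFin_P, reflect_Ppol,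
              Polynomial.eval_mul]
            by_cases hjk : j = k
            · subst hjk
              rw [Matrix.diagonal_apply_eq, eval_piP, Hv', pihat]
              simp only [Polynomial.eval_pow, Polynomial.eval_X]
              ring
            · rw [eval_piP_vanish n y j k hjk, Matrix.diagonal_apply_ne _ hjk, zero_mul]
  have h22 : M.toBlocks₂₂ = Matrix.of fun _ _ => EvalR n y z := by
    ext r s
    simp only [Matrix.toBlocks₂₂, Matrix.of_apply, Matrix.submatrix_apply, hM]
    rw [mulW0Vsq_z, e2_col_R, polFin_R, reflect_Rpol, Rpol, eval_piP, EvalR]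
  rw [← Matrix.fromBlocks_toBlocks M, h12, h11, h22, Matrix.det_fromBlocks_zero₁₂,
    det_fromBlocks_diag, Matrix.det_fin_one]
  rfl

end Stage7

namespace Stage8
open Stage3 Stage4 Stage5 Stage6 Stage7 DetQAux Stage2
variable {F : Type*} [Field F]
variable (n : ℕ) (y : Fin n → F) (z : F)

noncomputable def tpts : Fin (2*n+1) → F := fun r =>
  if h : (r : ℕ) < n then y ⟨r, h⟩
  else if h2 : (r : ℕ) < 2*n then (y ⟨(r : ℕ) - n, Nat.sub_lt_left_of_lt_add (by omega) (by omega)⟩)⁻¹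
  else (-z)⁻¹

noncomputable def ccoef : Fin (2*n+1) → F := fun r =>
  if _ : (r : ℕ) < n then 1
  else if _ : (r : ℕ) < 2*n then (y ⟨(r : ℕ) - n, Nat.sub_lt_left_of_lt_add (by omega) (by omega)⟩) ^ (2*n)
  else (-z) ^ (2*n)

lemma W0_factor (hy0 : ∀ k, y k ≠ 0) (hz0 : z ≠ 0) :
    W0mat n y z = Matrix.diagonal (ccoef n y z) * Matrix.vandermonde (tpts n y z) := by
  ext r m
  rw [Matrix.diagonal_mul, Matrix.vandermonde_apply]
  have hpow : ∀ u : F, u ≠ 0 → u ^ (2*n) * (u⁻¹) ^ (m : ℕ) = u ^ (2*n - (m : ℕ)) := by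
    intro u hu
    have hm : (m : ℕ) ≤ 2*n := by omega
    rw [pow_sub₀ u hu hm, inv_pow]
  simp only [W0mat, Matrix.of_apply, tpts, ccoef]
  split
  · rw [one_mul]
  split
  · rw [hpow _ (hy0 _)]
  · rw [hpow _ (neg_ne_zero.mpr hz0)]

lemma prod_ccoef : (∏ r, ccoef n y z r) = (∏ k, (y k) ^ (2*n)) * (-z) ^ (2*n) := by
  rw [← Equiv.prod_comp (e2 n) (ccoef n y z), Fintype.prod_sum_type, Fintype.prod_sum_type]
  have h1 : ∀ k : Fin n, ccoef n y z (e2 n (Sum.inl (Sum.inl k))) = 1 := by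
    intro k
    have h : ((e2 n (Sum.inl (Sum.inl k)) : Fin (2*n+1)) : ℕ) < n := by
      rw [e2_inll]; exact k.isLt
    simp only [ccoef]; rw [dif_pos h]
  have h2 : ∀ k : Fin n, ccoef n y z (e2 n (Sum.inl (Sum.inr k))) = (y k) ^ (2*n) := by
    intro k
    have hco := e2_inlr n k
    have ha : ¬ ((e2 n (Sum.inl (Sum.inr k)) : Fin (2*n+1)) : ℕ) < n := by omega
    have hb : ((e2 n (Sum.inl (Sum.inr k)) : Fin (2*n+1)) : ℕ) < 2*n := by
      have := k.isLt; omega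
    have hmk : (⟨((e2 n (Sum.inl (Sum.inr k)) : Fin (2*n+1)) : ℕ) - n, by omega⟩ : Fin n) = k := by
      apply Fin.ext; simp [hco]
    simp only [ccoef]; rw [dif_neg ha, dif_pos hb, hmk]
  have h3 : ∀ r : Fin 1, ccoef n y z (e2 n (Sum.inr r)) = (-z) ^ (2*n) := by
    intro r
    have hco := e2_inr n r
    have ha : ¬ ((e2 n (Sum.inr r) : Fin (2*n+1)) : ℕ) < n := by
      by_cases hn : n = 0
      · subst hn; omega
      · omega
    have hb : ¬ ((e2 n (Sum.inr r) : Fin (2*n+1)) : ℕ) < 2*n := by omega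
    simp only [ccoef]; rw [dif_neg ha, dif_neg hb]
  rw [Finset.prod_congr rfl fun k _ => h1 k, Finset.prod_congr rfl fun k _ => h2 k,
    Finset.prod_congr rfl fun r _ => h3 r]
  simp

lemma det_W0 (hy0 : ∀ k, y k ≠ 0) (hz0 : z ≠ 0) :
    (W0mat n y z).det = ((∏ k, (y k) ^ (2*n)) * (-z) ^ (2*n)) * pairProd (tpts n y z) := by
  rw [W0_factor n y z hy0 hz0, Matrix.det_mul, Matrix.det_diagonal, prod_ccoef,
    Matrix.det_vandermonde]
  rfl

/-- the middle-block point function -/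
noncomputable def upts : Fin (n+n) → F := fun i =>
  if h : (i : ℕ) < n then y ⟨i, h⟩ else (y ⟨(i : ℕ) - n, by omega⟩)⁻¹

lemma pairProd_tpts :
    pairProd (tpts n y z)
      = (pairProd y * pairProd (fun k => (y k)⁻¹) * ∏ i, ∏ j, ((y j)⁻¹ - y i))
        * ((∏ k, ((-z)⁻¹ - y k)) * ∏ k, ((-z)⁻¹ - (y k)⁻¹)) := by
  have hm : 2*n+1 = (n+n)+1 := by omega
  have step1 : pairProd (tpts n y z) = pairProd (upts n y) * pairProd (fun _ : Fin 1 => (-z)⁻¹)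
      * ∏ i, ∏ _j : Fin 1, ((-z)⁻¹ - upts n y i) := by
    apply pairProd_split' hm (tpts n y z) (upts n y) (fun _ : Fin 1 => (-z)⁻¹)
    · intro i
      have hco : ((finCongr hm.symm (Fin.castAdd 1 i) : Fin (2*n+1)) : ℕ) = (i : ℕ) := by simp
      simp only [tpts, upts]
      by_cases h : (i : ℕ) < n
      · rw [dif_pos (by omega : ((finCongr hm.symm (Fin.castAdd 1 i) : Fin (2*n+1)) : ℕ) < n),
          dif_pos h]
        exact congrArg y (Fin.ext hco)
      · have hb : ((finCongr hm.symm (Fin.castAdd 1 i) : Fin (2*n+1)) : ℕ) < 2*n := by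
          have := i.isLt; omega
        rw [dif_neg (by omega), dif_pos hb, dif_neg h]
        exact congrArg (fun t => (y t)⁻¹) (Fin.ext (by simp only [hco]))
    · intro j
      have hco : ((finCongr hm.symm (Fin.natAdd (n+n) j) : Fin (2*n+1)) : ℕ) = n+n+(j : ℕ) := by
        simp
        omega
      simp only [tpts]
      rw [dif_neg (by omega), dif_neg (by omega)]
  have step2 : pairProd (upts n y) = pairProd y * pairProd (fun k => (y k)⁻¹)
      * ∏ i, ∏ j, ((y j)⁻¹ - y i) := by
    apply pairProd_split' rfl (upts n y) y (fun k => (y k)⁻¹)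
    · intro i
      have hco : ((finCongr rfl (Fin.castAdd n i) : Fin (n+n)) : ℕ) = (i : ℕ) := by simp
      simp only [upts]
      rw [dif_pos (by omega : ((finCongr rfl (Fin.castAdd n i) : Fin (n+n)) : ℕ) < n)]
      exact congrArg y (Fin.ext hco)
    · intro i
      have hco : ((finCongr rfl (Fin.natAdd n i) : Fin (n+n)) : ℕ) = n + (i : ℕ) := by
        simp
        omega
      simp only [upts]
      rw [dif_neg (by omega)]
      exact congrArg (fun t => (y t)⁻¹) (Fin.ext (by simp only [hco]; omega))
  have step3 : (∏ i, ∏ _j : Fin 1, ((-z)⁻¹ - upts n y i))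
      = (∏ k, ((-z)⁻¹ - y k)) * ∏ k, ((-z)⁻¹ - (y k)⁻¹) := by
    have h0 : ∀ i : Fin (n+n), (∏ _j : Fin 1, ((-z)⁻¹ - upts n y i)) = ((-z)⁻¹ - upts n y i) := by
      intro i; rw [Fin.prod_univ_one]
    rw [Finset.prod_congr rfl fun i _ => h0 i, Fin.prod_univ_add]
    congr 1
    · apply Finset.prod_congr rfl
      intro k _
      simp only [upts]
      rw [dif_pos (by simpa using k.isLt : ((Fin.castAdd n k : Fin (n+n)) : ℕ) < n)]
      have : (⟨((Fin.castAdd n k : Fin (n+n)) : ℕ), by simpa using k.isLt⟩ : Fin n) = k :=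
        Fin.ext (by simp)
      rw [this]
    · apply Finset.prod_congr rfl
      intro k _
      simp only [upts]
      rw [dif_neg (by simp : ¬ ((Fin.natAdd n k : Fin (n+n)) : ℕ) < n)]
      have : (⟨((Fin.natAdd n k : Fin (n+n)) : ℕ) - n, by simp⟩ : Fin n) = k :=
        Fin.ext (by simp)
      rw [this]
  rw [step1, step2, step3]
  have hz1 : pairProd (fun _ : Fin 1 => (-z)⁻¹) = 1 := by
    unfold pairProd
    rw [Fin.prod_univ_one]
    have : (Finset.Ioi (0 : Fin 1)) = ∅ := by decide
    rw [this, Finset.prod_empty]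
  rw [hz1, mul_one]

end Stage8

namespace Stage9
open Stage2 Stage5 Stage6 Stage8 DetQAux
variable {F : Type*} [Field F]
variable (n : ℕ) (y : Fin n → F) (z : F)

lemma prod2_merge {S : Fin n → Finset (Fin n)} (f g : Fin n → Fin n → F) :
    (∏ k, ∏ l ∈ S k, f k l) * (∏ k, ∏ l ∈ S k, g k l) = ∏ k, ∏ l ∈ S k, (f k l * g k l) := by
  rw [← Finset.prod_mul_distrib]
  exact Finset.prod_congr rfl fun k _ => (Finset.prod_mul_distrib).symm

lemma prod2_merge' (f g : Fin n → Fin n → F) :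
    (∏ k, ∏ l, f k l) * (∏ k, ∏ l, g k l) = ∏ k, ∏ l, (f k l * g k l) := by
  rw [← Finset.prod_mul_distrib]
  exact Finset.prod_congr rfl fun k _ => (Finset.prod_mul_distrib).symm

lemma star (hy0 : ∀ k, y k ≠ 0) (hz0 : z ≠ 0) :
    ((∏ k, (y k)^(2*n)) * (-z)^(2*n)) * pairProd (tpts n y z)
      = ∏ k, (pihat n y k * ((1 + y k * z) * ((y k + z) * (1 - y k * y k)))) := by
  have hzne : (-z : F) ≠ 0 := neg_ne_zero.mpr hz0
  rw [pairProd_tpts]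
  have hA : (∏ k, (y k)^(2*n)) = (∏ k, (y k)^n) * ((∏ k, (y k)^(n-1)) * (∏ k, y k)) := by
    rw [← Finset.prod_mul_distrib, ← Finset.prod_mul_distrib]
    refine Finset.prod_congr rfl fun k _ => ?_
    rw [← pow_succ, ← pow_add]
    congr 1
    have := k.pos; omega
  have hB : ((-z) : F)^(2*n) = (∏ _k : Fin n, (-z)) * (∏ _k : Fin n, (-z)) := by
    rw [Finset.prod_const, Finset.card_univ, Fintype.card_fin, ← pow_add]
    congr 1; omega
  rw [hA, hB]
  -- key identities
  have key1 : pairProd (fun k => (y k)⁻¹) * (∏ k, (y k)^(n-1))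
      = ∏ k, ∏ l ∈ Finset.Ioi k, (y k - y l) := by
    rw [← prod_pairs_mul y]
    unfold pairProd
    rw [prod2_merge]
    refine Finset.prod_congr rfl fun k _ => Finset.prod_congr rfl fun l _ => ?_
    have h1 := hy0 k; have h2 := hy0 l
    rw [sub_mul, mul_comm (y k) (y l), inv_mul_cancel_left₀ h2]
    show y k - (y k)⁻¹ * (y l * y k) = y k - y l
    rw [mul_comm (y l) (y k), inv_mul_cancel_left₀ h1]
  have key2 : (∏ i, ∏ j, ((y j)⁻¹ - y i)) * (∏ k, (y k)^n) = ∏ i, ∏ j, (1 - y i * y j) := by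
    have hD : (∏ k, (y k)^n) = ∏ i : Fin n, ∏ j : Fin n, y j := by
      rw [Finset.prod_comm]
      exact Finset.prod_congr rfl fun k _ => by
        rw [Finset.prod_const, Finset.card_univ, Fintype.card_fin]
    rw [hD, prod2_merge']
    refine Finset.prod_congr rfl fun i _ => Finset.prod_congr rfl fun j _ => ?_
    have h1 := hy0 j
    field_simp
  have key3 : (∏ k, ((-z)⁻¹ - y k)) * (∏ _k : Fin n, (-z)) = ∏ k, (1 + y k * z) := by
    rw [← Finset.prod_mul_distrib]
    refine Finset.prod_congr rfl fun k _ => ?_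
    field_simp
    ring
  have key4 : (∏ k, ((-z)⁻¹ - (y k)⁻¹)) * ((∏ _k : Fin n, (-z)) * (∏ k, y k))
      = ∏ k, (y k + z) := by
    rw [← Finset.prod_mul_distrib, ← Finset.prod_mul_distrib]
    refine Finset.prod_congr rfl fun k _ => ?_
    have h1 := hy0 k
    field_simp
    ring
  have key5 : (∏ i, ∏ j, (1 - y i * y j))
      = (∏ k, (1 - y k * y k)) * ∏ k, ∏ l ∈ Finset.univ.erase k, (1 - y k * y l) := by
    rw [← Finset.prod_mul_distrib]
    refine Finset.prod_congr rfl fun i _ => ?_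
    exact (Finset.mul_prod_erase Finset.univ (fun j => 1 - y i * y j) (Finset.mem_univ i)).symm
  have key6 : pairProd y * (∏ k, ∏ l ∈ Finset.Ioi k, (y k - y l))
      = ∏ k, ∏ l ∈ Finset.univ.erase k, (y k - y l) := by
    rw [prod_erase_eq_pairs (fun k l => y k - y l)]
    unfold pairProd
    rw [prod2_merge]
    refine Finset.prod_congr rfl fun k _ => Finset.prod_congr rfl fun l _ => ?_
    ring
  have key7 : (∏ k, ∏ l ∈ Finset.univ.erase k, (1 - y k * y l))
      = ∏ k, ∏ l ∈ Finset.univ.erase k, (1 - y l * y k) := by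
    rw [prod_erase_eq_pairs (fun k l => 1 - y k * y l),
      prod_erase_eq_pairs (fun k l => 1 - y l * y k)]
    refine Finset.prod_congr rfl fun k _ => Finset.prod_congr rfl fun l _ => ?_
    ring
  have hR : (∏ k, (pihat n y k * ((1 + y k * z) * ((y k + z) * (1 - y k * y k)))))
      = (∏ k, ∏ l ∈ Finset.univ.erase k, (y k - y l))
        * (∏ k, ∏ l ∈ Finset.univ.erase k, (1 - y l * y k))
        * (∏ k, (1 + y k * z)) * (∏ k, (y k + z)) * (∏ k, (1 - y k * y k)) := by
    have hstep : ∀ k : Fin n, pihat n y k * ((1 + y k * z) * ((y k + z) * (1 - y k * y k)))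
        = ((∏ l ∈ Finset.univ.erase k, (y k - y l)) * (∏ l ∈ Finset.univ.erase k, (1 - y l * y k)))
          * ((1 + y k * z) * ((y k + z) * (1 - y k * y k))) := by
      intro k
      rw [pihat, Finset.prod_mul_distrib]
    rw [Finset.prod_congr rfl fun k _ => hstep k]
    rw [Finset.prod_mul_distrib, Finset.prod_mul_distrib, Finset.prod_mul_distrib,
      Finset.prod_mul_distrib]
    ring
  calc (∏ k, (y k)^n) * ((∏ k, (y k)^(n-1)) * (∏ k, y k))
        * ((∏ _k : Fin n, (-z)) * (∏ _k : Fin n, (-z)))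
        * ((pairProd y * pairProd (fun k => (y k)⁻¹) * ∏ i, ∏ j, ((y j)⁻¹ - y i))
          * ((∏ k, ((-z)⁻¹ - y k)) * ∏ k, ((-z)⁻¹ - (y k)⁻¹)))
      = pairProd y * (pairProd (fun k => (y k)⁻¹) * (∏ k, (y k)^(n-1)))
        * ((∏ i, ∏ j, ((y j)⁻¹ - y i)) * (∏ k, (y k)^n))
        * ((∏ k, ((-z)⁻¹ - y k)) * (∏ _k : Fin n, (-z)))
        * ((∏ k, ((-z)⁻¹ - (y k)⁻¹)) * ((∏ _k : Fin n, (-z)) * (∏ k, y k))) := by ring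
    _ = pairProd y * (∏ k, ∏ l ∈ Finset.Ioi k, (y k - y l))
        * (∏ i, ∏ j, (1 - y i * y j)) * (∏ k, (1 + y k * z)) * (∏ k, (y k + z)) := by
        rw [key1, key2, key3, key4]
    _ = (pairProd y * (∏ k, ∏ l ∈ Finset.Ioi k, (y k - y l)))
        * ((∏ k, (1 - y k * y k)) * ∏ k, ∏ l ∈ Finset.univ.erase k, (1 - y k * y l))
        * (∏ k, (1 + y k * z)) * (∏ k, (y k + z)) := by rw [key5]
    _ = (∏ k, ∏ l ∈ Finset.univ.erase k, (y k - y l))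
        * (∏ k, ∏ l ∈ Finset.univ.erase k, (1 - y l * y k))
        * (∏ k, (1 + y k * z)) * (∏ k, (y k + z)) * (∏ k, (1 - y k * y k)) := by
        rw [key6, key7]; ring
    _ = ∏ k, (pihat n y k * ((1 + y k * z) * ((y k + z) * (1 - y k * y k)))) := hR.symm

end Stage9

namespace Stage10
open Stage2 Stage5 Stage6 Stage7 Stage8 Stage9 DetQAux
variable {F : Type*} [Field F]

lemma main_det (n : ℕ) (x y a b : Fin n → F) (z : F)
    (hy0 : ∀ k, y k ≠ 0) (hz0 : z ≠ 0)
    (hyd : ∀ k l, k ≠ l → y k ≠ y l)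
    (hyy1 : ∀ k l, y k * y l ≠ 1)
    (hby : ∀ k, b k * (y k)^2 ≠ 1)
    (hyz1 : ∀ k, 1 + y k * z ≠ 0)
    (hyz2 : ∀ k, y k + z ≠ 0) :
    (Amat n x y a b z).det = (-1)^n * (Wmat n x y a b z).det := by
  classical
  have h1 : (Wmat n x y a b z).det * (W0mat n y z * Vsq n y b z).det
      = (W0mat n y z).det * (Wmat n x y a b z * Vsq n y b z).det := by
    rw [Matrix.det_mul, Matrix.det_mul]; ring
  rw [det_WV, det_W0V, det_W0 n y z hy0 hz0] at h1
  have hstar := star n y z hy0 hz0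
  rw [hstar] at h1
  -- rewrite the Gv/Hv' product
  have hk : ∀ k, Gv n y b z k * Hv' n y k - Hv n y k * Gv' n y b z k
      = (-1) * (pihat n y k * pihat n y k *
          (((1 + y k * z) * ((y k + z) * (1 - y k * y k))) * (1 - b k * (y k)^2))) := by
    intro k
    simp only [Gv, Hv, Gv', Hv', EvS, EvSr]
    ring
  rw [Finset.prod_congr rfl fun k _ => hk k, Finset.prod_mul_distrib, Finset.prod_const,
    Finset.card_univ, Fintype.card_fin] at h1
  -- combine RHS products
  have hRc : (∏ k, (pihat n y k * ((1 + y k * z) * ((y k + z) * (1 - y k * y k)))))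
      * ((Amat n x y a b z).det * ((∏ k, Dv n y b k) * EvalR n y z))
      = (Amat n x y a b z).det *
        ((∏ k, (pihat n y k * pihat n y k *
          (((1 + y k * z) * ((y k + z) * (1 - y k * y k))) * (1 - b k * (y k)^2)))) * EvalR n y z) := by
    have : (∏ k, (pihat n y k * ((1 + y k * z) * ((y k + z) * (1 - y k * y k)))))
        * (∏ k, Dv n y b k)
        = ∏ k, (pihat n y k * pihat n y k *
            (((1 + y k * z) * ((y k + z) * (1 - y k * y k))) * (1 - b k * (y k)^2))) := by
      rw [← Finset.prod_mul_distrib]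
      refine Finset.prod_congr rfl fun k _ => ?_
      rw [Dv]
      ring
    rw [← this]
    ring
  rw [hRc] at h1
  set C0 : F := (∏ k, (pihat n y k * pihat n y k *
      (((1 + y k * z) * ((y k + z) * (1 - y k * y k))) * (1 - b k * (y k)^2)))) * EvalR n y z with hC0
  have hC0ne : C0 ≠ 0 := by
    apply mul_ne_zero
    · apply Finset.prod_ne_zero_iff.mpr
      intro k _
      apply mul_ne_zero
      apply mul_ne_zero
      · apply Finset.prod_ne_zero_iff.mpr
        intro l hl
        have hlk : l ≠ k := (Finset.mem_erase.mp hl).1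
        apply mul_ne_zero
        · exact sub_ne_zero.mpr (hyd k l (Ne.symm hlk))
        · exact sub_ne_zero.mpr (fun h => hyy1 l k (h.symm ▸ h))
      · apply Finset.prod_ne_zero_iff.mpr
        intro l hl
        have hlk : l ≠ k := (Finset.mem_erase.mp hl).1
        apply mul_ne_zero
        · exact sub_ne_zero.mpr (hyd k l (Ne.symm hlk))
        · exact sub_ne_zero.mpr (fun h => hyy1 l k (h.symm ▸ h))
      · apply mul_ne_zero
        · apply mul_ne_zero (hyz1 k)
          apply mul_ne_zero (hyz2 k)
          exact sub_ne_zero.mpr fun h => hyy1 k k h.symm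
        · exact sub_ne_zero.mpr fun h => hby k h.symm
    · rw [EvalR]
      apply Finset.prod_ne_zero_iff.mpr
      intro l _
      apply mul_ne_zero
      · intro h
        apply hyz2 l
        have : y l + z = -(-z - y l) := by ring
        rw [this, h, neg_zero]
      · intro h
        apply hyz1 l
        have : 1 + y l * z = 1 - y l * (-z) := by ring
        rw [this, h]
  have h2 : (Amat n x y a b z).det * C0 = ((-1)^n * (Wmat n x y a b z).det) * C0 := by
    rw [hC0]
    calc (Amat n x y a b z).det * ((∏ k, (pihat n y k * pihat n y k *
          (((1 + y k * z) * ((y k + z) * (1 - y k * y k))) * (1 - b k * (y k)^2)))) * EvalR n y z)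
        = (Wmat n x y a b z).det * ((-1)^n * (∏ k, (pihat n y k * pihat n y k *
            (((1 + y k * z) * ((y k + z) * (1 - y k * y k))) * (1 - b k * (y k)^2)))) * EvalR n y z) := by
          rw [← h1]
        _ = _ := by ring
  exact mul_right_cancel₀ hC0ne h2

end Stage10

namespace Stage11
open Stage5 Stage6 Stage10
variable {R S : Type*} [CommRing R] [CommRing S]

lemma map_Amat (f : R →+* S) (n : ℕ) (x y a b : Fin n → R) (z : R) :
    (Amat n x y a b z).map f = Amat n (f ∘ x) (f ∘ y) (f ∘ a) (f ∘ b) (f z) := by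
  ext i k
  simp only [Amat, Matrix.map_apply, Matrix.of_apply, Function.comp_apply, EvS, EvSr,
    _root_.map_mul, _root_.map_sub, _root_.map_add, _root_.map_one, map_prod]

lemma map_Wmat (f : R →+* S) (n : ℕ) (x y a b : Fin n → R) (z : R) :
    (Wmat n x y a b z).map f = Wmat n (f ∘ x) (f ∘ y) (f ∘ a) (f ∘ b) (f z) := by
  ext i j
  simp only [Wmat, Matrix.map_apply, Matrix.of_apply, Function.comp_apply]
  rw [apply_dite f]
  congr 1
  · funext h
    rw [_root_.map_sub, _root_.map_mul, map_pow, map_pow]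
  · funext h
    rw [apply_dite f]
    congr 1
    · funext h2
      rw [_root_.map_sub, _root_.map_mul, map_pow, map_pow]
    · funext h2
      rw [map_pow, _root_.map_neg]

/-- variable bookkeeping type -/
abbrev VarT (n : ℕ) := Sum (Fin n) (Sum (Fin n) (Sum (Fin n) (Sum (Fin n) Unit)))

lemma main_det_all {K : Type*} [Field K] (n : ℕ) (x y a b : Fin n → K) (z : K) :
    (Amat n x y a b z).det = (-1)^n * (Wmat n x y a b z).det := by
  classical
  set σ := VarT n
  let R₀ := MvPolynomial σ ℤ
  let F₀ := FractionRing R₀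
  let φ : R₀ →+* F₀ := algebraMap R₀ F₀
  have hinj : Function.Injective φ := IsFractionRing.injective R₀ F₀
  -- generic variables
  let vx : Fin n → σ := fun i => Sum.inl i
  let vy : Fin n → σ := fun i => Sum.inr (Sum.inl i)
  let va : Fin n → σ := fun i => Sum.inr (Sum.inr (Sum.inl i))
  let vb : Fin n → σ := fun i => Sum.inr (Sum.inr (Sum.inr (Sum.inl i)))
  let vz : σ := Sum.inr (Sum.inr (Sum.inr (Sum.inr ())))
  let gx : Fin n → F₀ := fun i => φ (MvPolynomial.X (vx i))
  let gy : Fin n → F₀ := fun i => φ (MvPolynomial.X (vy i))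
  let ga : Fin n → F₀ := fun i => φ (MvPolynomial.X (va i))
  let gb : Fin n → F₀ := fun i => φ (MvPolynomial.X (vb i))
  let gz : F₀ := φ (MvPolynomial.X vz)
  -- nonvanishing of evaluated polynomials
  have poly_ne : ∀ (p q : R₀) (v : σ → ℤ), MvPolynomial.eval v p ≠ MvPolynomial.eval v q →
      φ p ≠ φ q := by
    intro p q v hev h
    exact hev (congrArg (MvPolynomial.eval v) (hinj h))
  have hy0 : ∀ k, gy k ≠ 0 := by
    intro k
    have : (0 : F₀) = φ 0 := by rw [_root_.map_zero]
    rw [this]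
    apply poly_ne _ _ (fun _ => 1)
    simp
  have hz0 : gz ≠ 0 := by
    have : (0 : F₀) = φ 0 := by rw [_root_.map_zero]
    rw [this]
    apply poly_ne _ _ (fun _ => 1)
    simp
  have hyd : ∀ k l, k ≠ l → gy k ≠ gy l := by
    intro k l hkl
    apply poly_ne _ _ (fun s => if s = vy k then 1 else 0)
    have h1 : vy k ≠ vy l := fun h => hkl (Sum.inl_injective (Sum.inr_injective h))
    simp [MvPolynomial.eval_X, Ne.symm h1]
  have hyy1 : ∀ k l, gy k * gy l ≠ 1 := by
    intro k l
    have h1 : gy k * gy l = φ (MvPolynomial.X (vy k) * MvPolynomial.X (vy l)) := by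
      rw [_root_.map_mul]
    have h2 : (1 : F₀) = φ 1 := by rw [_root_.map_one]
    rw [h1, h2]
    apply poly_ne _ _ (fun _ => 0)
    simp
  have hby : ∀ k, gb k * (gy k)^2 ≠ 1 := by
    intro k
    have h1 : gb k * (gy k)^2 = φ (MvPolynomial.X (vb k) * (MvPolynomial.X (vy k))^2) := by
      rw [_root_.map_mul, map_pow]
    have h2 : (1 : F₀) = φ 1 := by rw [_root_.map_one]
    rw [h1, h2]
    apply poly_ne _ _ (fun _ => 0)
    simp
  have hyz1 : ∀ k, 1 + gy k * gz ≠ 0 := by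
    intro k
    have h1 : 1 + gy k * gz = φ (1 + MvPolynomial.X (vy k) * MvPolynomial.X vz) := by
      rw [_root_.map_add, _root_.map_one, _root_.map_mul]
    have h2 : (0 : F₀) = φ 0 := by rw [_root_.map_zero]
    rw [h1, h2]
    apply poly_ne _ _ (fun _ => 0)
    simp
  have hyz2 : ∀ k, gy k + gz ≠ 0 := by
    intro k
    have h1 : gy k + gz = φ (MvPolynomial.X (vy k) + MvPolynomial.X vz) := by
      rw [_root_.map_add]
    have h2 : (0 : F₀) = φ 0 := by rw [_root_.map_zero]
    rw [h1, h2]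
    apply poly_ne _ _ (fun _ => 1)
    simp
  -- the generic identity
  have hgen := main_det n gx gy ga gb gz hy0 hz0 hyd hyy1 hby hyz1 hyz2
  -- pull back to R₀
  set xR : Fin n → R₀ := fun i => MvPolynomial.X (vx i)
  set yR : Fin n → R₀ := fun i => MvPolynomial.X (vy i)
  set aR : Fin n → R₀ := fun i => MvPolynomial.X (va i)
  set bR : Fin n → R₀ := fun i => MvPolynomial.X (vb i)
  set zR : R₀ := MvPolynomial.X vz
  have hAmap : φ ((Amat n xR yR aR bR zR).det) = (Amat n gx gy ga gb gz).det := by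
    rw [RingHom.map_det, RingHom.mapMatrix_apply, map_Amat]
    rfl
  have hWmap : φ ((Wmat n xR yR aR bR zR).det) = (Wmat n gx gy ga gb gz).det := by
    rw [RingHom.map_det, RingHom.mapMatrix_apply, map_Wmat]
    rfl
  have hR0 : (Amat n xR yR aR bR zR).det = (-1)^n * (Wmat n xR yR aR bR zR).det := by
    apply hinj
    rw [hAmap, _root_.map_mul, map_pow, _root_.map_neg, _root_.map_one, hWmap]
    exact hgen
  -- push forward to K
  let vals : σ → K := fun s =>
    Sum.elim x (Sum.elim y (Sum.elim a (Sum.elim b (fun _ => z)))) s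
  let ψ : R₀ →+* K := MvPolynomial.eval₂Hom (Int.castRingHom K) vals
  have hx' : ⇑ψ ∘ xR = x := by funext i; exact MvPolynomial.eval₂Hom_X' _ _ _
  have hy' : ⇑ψ ∘ yR = y := by funext i; exact MvPolynomial.eval₂Hom_X' _ _ _
  have ha' : ⇑ψ ∘ aR = a := by funext i; exact MvPolynomial.eval₂Hom_X' _ _ _
  have hb' : ⇑ψ ∘ bR = b := by funext i; exact MvPolynomial.eval₂Hom_X' _ _ _
  have hz' : ψ zR = z := MvPolynomial.eval₂Hom_X' _ _ _
  have := congrArg ψ hR0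
  rw [RingHom.map_det, RingHom.mapMatrix_apply, map_Amat, _root_.map_mul, map_pow,
    _root_.map_neg, _root_.map_one, RingHom.map_det, RingHom.mapMatrix_apply, map_Wmat,
    hx', hy', ha', hb', hz'] at this
  exact this

end Stage11

/-- The rational function `q(x,y,z,a,b)` of Lemma 4.3. -/
noncomputable def qfun {K : Type*} [Field K] (x y z a b : K) : K :=
  (1 + x * z) * (1 + y * z) / (1 - x * y)
    - a * ((x + z) * (1 + y * z) / (x - y))
    + b * ((1 + x * z) * (y + z) / (x - y))
    - a * b * ((x + z) * (y + z) / (1 - x * y))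

/-- `det(q(x_i,y_j,z,a_i,b_j)) = (−1)^n / ∏_{i,j}(x_i−y_j)(1−x_i y_j) · det W`. -/
theorem det_q_eq_det_W {K : Type*} [Field K] (n : ℕ) (x y a b : Fin n → K) (z : K)
    (hxy : ∀ i j, x i ≠ y j) (hxy1 : ∀ i j, x i * y j ≠ 1) :
    (Matrix.of fun i j : Fin n => qfun (x i) (y j) z (a i) (b j)).det
      = (-1 : K) ^ n / (∏ i, ∏ j, (x i - y j) * (1 - x i * y j)) *
        (Matrix.of fun i j : Fin (2 * n + 1) =>
          if h : (i : ℕ) < n then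
            x ⟨i, h⟩ ^ (j : ℕ) - a ⟨i, h⟩ * x ⟨i, h⟩ ^ (2 * n - (j : ℕ))
          else if h2 : (i : ℕ) < 2 * n then
            y ⟨(i : ℕ) - n, by omega⟩ ^ (j : ℕ)
              - b ⟨(i : ℕ) - n, by omega⟩ * y ⟨(i : ℕ) - n, by omega⟩ ^ (2 * n - (j : ℕ))
          else (-z) ^ (2 * n - (j : ℕ))).det := by
  classical
  have hA := Stage11.main_det_all n x y a b z
  have hWsame : (Matrix.of fun i j : Fin (2 * n + 1) =>
          if h : (i : ℕ) < n then
            x ⟨i, h⟩ ^ (j : ℕ) - a ⟨i, h⟩ * x ⟨i, h⟩ ^ (2 * n - (j : ℕ))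
          else if h2 : (i : ℕ) < 2 * n then
            y ⟨(i : ℕ) - n, by omega⟩ ^ (j : ℕ)
              - b ⟨(i : ℕ) - n, by omega⟩ * y ⟨(i : ℕ) - n, by omega⟩ ^ (2 * n - (j : ℕ))
          else (-z) ^ (2 * n - (j : ℕ))) = Stage5.Wmat n x y a b z := rfl
  rw [hWsame]
  set Q : Matrix (Fin n) (Fin n) K :=
    Matrix.of fun i j : Fin n => qfun (x i) (y j) z (a i) (b j) with hQ
  have hAeq : Stage6.Amat n x y a b z
      = Matrix.of (fun i j => (∏ l, ((x i - y l) * (1 - x i * y l))) * Q i j) := by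
    ext i j
    simp only [Stage6.Amat, Matrix.of_apply, hQ]
    have h1 : x i - y j ≠ 0 := sub_ne_zero.mpr (hxy i j)
    have h2 : (1 : K) - x i * y j ≠ 0 := sub_ne_zero.mpr (Ne.symm (hxy1 i j))
    have hq : qfun (x i) (y j) z (a i) (b j) * ((x i - y j) * (1 - x i * y j))
        = Stage6.EvS (x i) (y j) (b j) z - a i * Stage6.EvSr (x i) (y j) (b j) z := by
      rw [qfun, Stage6.EvS, Stage6.EvSr]
      field_simp
      ring
    have hsplit : (∏ l, ((x i - y l) * (1 - x i * y l)))
        = (∏ l ∈ Finset.univ.erase j, ((x i - y l) * (1 - y l * x i)))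
            * ((x i - y j) * (1 - x i * y j)) := by
      rw [← Finset.prod_erase_mul Finset.univ _ (Finset.mem_univ j)]
      congr 1
      refine Finset.prod_congr rfl fun l _ => ?_
      ring
    rw [hsplit, ← hq]
    ring
  rw [hAeq, Matrix.det_mul_column] at hA
  have hPne : (∏ i, ∏ j, (x i - y j) * (1 - x i * y j)) ≠ 0 := by
    apply Finset.prod_ne_zero_iff.mpr
    intro i _
    apply Finset.prod_ne_zero_iff.mpr
    intro j _
    exact mul_ne_zero (sub_ne_zero.mpr (hxy i j)) (sub_ne_zero.mpr (Ne.symm (hxy1 i j)))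
  have hPP : (∏ i, ∏ l, ((x i - y l) * (1 - x i * y l)))
      = (∏ i, ∏ j, (x i - y j) * (1 - x i * y j)) := rfl
  rw [hPP] at hA
  field_simp
  rw [mul_comm] at hA
  rw [hA]
end
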